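/- arXiv:2408.17274 — 3 statements merged into one kernel-verified Lean document; each statement's English description precedes it below -/
import Mathlib

section
/- Let X: [0,1] → ℝ be A_s-Lipschitz, let u_1 ≤ … ≤ u_N be the order statistics (increasing rearrangement) of N i.i.d. Uniform[0,1] random variables, and let X̄_N be the step function X̄_N(u) = Σ_{i=1}^N X(u_i)·1{u ∈ I_i}. Then E‖X̄_N − X‖_{L²[0,1]} ≤ A_s/√(6N). -/
open MeasureTheory Set ProbabilityTheory

noncomputable section

/-- The `i`-th cell of the equal-spaced partition of `[0,1]` into `m` pieces. -/
def cell (m : ℕ) (i : Fin m) : Set ℝ :=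
  if (i : ℕ) = m - 1 then Set.Icc ((m - 1 : ℝ) / m) 1
  else Set.Ico ((i : ℝ) / m) (((i : ℝ) + 1) / m)

/-- Piecewise-constant interpolation of a vector. -/
def interp (m : ℕ) (x : Fin m → ℝ) : ℝ → ℝ :=
  fun u => ∑ i, x i * (cell m i).indicator (fun _ => (1 : ℝ)) u

/-- Induced graphon (step kernel) of a matrix. -/
def interp2 (m : ℕ) (S : Fin m → Fin m → ℝ) : ℝ → ℝ → ℝ :=
  fun u v => ∑ i, ∑ j, S i j * (cell m i).indicator (fun _ => (1 : ℝ)) u *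
    (cell m j).indicator (fun _ => (1 : ℝ)) v

/-- L² norm on [0,1]. -/
def l2 (f : ℝ → ℝ) : ℝ := Real.sqrt (∫ u in Set.Icc (0 : ℝ) 1, (f u) ^ 2)

/-- L² norm on [0,1]². -/
def kl2 (W : ℝ → ℝ → ℝ) : ℝ :=
  Real.sqrt (∫ q in (Set.Icc (0 : ℝ) 1) ×ˢ (Set.Icc (0 : ℝ) 1), (W q.1 q.2) ^ 2)

/-- Graphon shift operator. -/
def shiftOp (W : ℝ → ℝ → ℝ) (X : ℝ → ℝ) : ℝ → ℝ :=
  fun v => ∫ u in Set.Icc (0 : ℝ) 1, W u v * X u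

/-- Iterated graphon shift. -/
def shiftIter (W : ℝ → ℝ → ℝ) (X : ℝ → ℝ) : ℕ → ℝ → ℝ
  | 0 => X
  | k + 1 => shiftOp W (shiftIter W X k)

/-- Graphon convolutional filter with taps `h`. -/
def gfilter {K : ℕ} (h : Fin K → ℝ) (W : ℝ → ℝ → ℝ) (X : ℝ → ℝ) : ℝ → ℝ :=
  fun v => ∑ k, h k * shiftIter W X k v

/-- Frequency response of a filter. -/
def freqResp {K : ℕ} (h : Fin K → ℝ) (lam : ℝ) : ℝ := ∑ k, h k * lam ^ (k : ℕ)

/-- Graph convolutional filter with taps `h`. -/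
def mfilter {K n : ℕ} (h : Fin K → ℝ) (S : Matrix (Fin n) (Fin n) ℝ) (x : Fin n → ℝ) :
    Fin n → ℝ :=
  ∑ k, h k • (S ^ (k : ℕ)).mulVec x

/-- `lam` is a nonzero eigenvalue of the integral operator with kernel `W` on `L²[0,1]`. -/
def IsEig (W : ℝ → ℝ → ℝ) (lam : ℝ) : Prop :=
  lam ≠ 0 ∧ ∃ φ : ℝ → ℝ, MemLp φ 2 (volume.restrict (Set.Icc (0 : ℝ) 1)) ∧
    ¬ (φ =ᵐ[volume.restrict (Set.Icc (0 : ℝ) 1)] 0) ∧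
    (∀ᵐ v ∂(volume.restrict (Set.Icc (0 : ℝ) 1)), shiftOp W φ v = lam * φ v)

/-- `Δh(λ) = min_k max_i |h(λ_i) - k|` over the eigenvalues of `W`. -/
def deltaH {K : ℕ} (h : Fin K → ℝ) (W : ℝ → ℝ → ℝ) : ℝ :=
  ⨅ k : ℝ, ⨆ lam ∈ {l : ℝ | IsEig W l}, |freqResp h lam - k|

/-- Bernoulli law with parameter `p`, as a measure on `ℝ` supported on `{0,1}`. -/
def bernoulliReal (p : ℝ) : Measure ℝ :=
  ENNReal.ofReal p • Measure.dirac 1 + ENNReal.ofReal (1 - p) • Measure.dirac 0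

/-- Graphon (WNN) neural network features, layer by layer. -/
def wnn (σ : ℝ → ℝ) (W : ℝ → ℝ → ℝ) (K : ℕ) (Fdim : ℕ → ℕ)
    (H : ℕ → ℕ → ℕ → Fin K → ℝ) (X0 : ℕ → ℝ → ℝ) : ℕ → ℕ → ℝ → ℝ
  | 0, f => X0 f
  | l + 1, f => fun u =>
      σ (∑ g ∈ Finset.range (Fdim l), gfilter (H l g f) W (wnn σ W K Fdim H X0 l g) u)

/-- Graph convolutional network features, layer by layer. -/
def gcn (σ : ℝ → ℝ) {n : ℕ} (S : Matrix (Fin n) (Fin n) ℝ) (K : ℕ) (Fdim : ℕ → ℕ)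
    (H : ℕ → ℕ → ℕ → Fin K → ℝ) (x0 : ℕ → Fin n → ℝ) : ℕ → ℕ → Fin n → ℝ
  | 0, f => x0 f
  | l + 1, f => fun i =>
      σ ((∑ g ∈ Finset.range (Fdim l), mfilter (H l g f) S (gcn σ S K Fdim H x0 l g)) i)

/-- `u ω` is the increasing rearrangement (order statistics) of `(v i ω)_i`. -/
def SortedVersion {Ω : Type*} {N : ℕ} (u : Ω → Fin N → ℝ) (v : Fin N → Ω → ℝ) : Prop :=
  ∀ ω, Monotone (u ω) ∧ ∃ σ : Equiv.Perm (Fin N), ∀ i, u ω i = v (σ i) ω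

/-- The family `v` is i.i.d. uniform on `[0,1]`. -/
def IIDUniform {Ω : Type*} [MeasurableSpace Ω] {N : ℕ} (v : Fin N → Ω → ℝ)
    (μ : Measure Ω) : Prop :=
  (∀ i, Measurable (v i)) ∧ iIndepFun v μ ∧
    ∀ i, μ.map (v i) = volume.restrict (Set.Icc (0 : ℝ) 1)

/-- Given `ω₁` (the latent features), the edge variables `e i j ω₁ : Ω₂ → ℝ` are symmetric,
conditionally independent over pairs `i ≤ j`, with `e i j ω₁ ∼ Bernoulli (W (u ω₁ i) (u ω₁ j))`. -/
def CondBernoulliAdj {Ω₁ Ω₂ : Type*} [MeasurableSpace Ω₂]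
    (μ₂ : Measure Ω₂) {N : ℕ} (e : Fin N → Fin N → Ω₁ → Ω₂ → ℝ)
    (W : ℝ → ℝ → ℝ) (u : Ω₁ → Fin N → ℝ) : Prop :=
  (∀ i j ω₁, Measurable (e i j ω₁)) ∧
  (∀ i j ω₁, e i j ω₁ = e j i ω₁) ∧
  (∀ ω₁, iIndepFun
    (fun q : {q : Fin N × Fin N // q.1 ≤ q.2} => e q.1.1 q.1.2 ω₁) μ₂) ∧
  (∀ i j ω₁, μ₂.map (e i j ω₁) = bernoulliReal (W (u ω₁ i) (u ω₁ j)))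

/-- `L₁ = ∫_{[0,t]²} W`. -/
def L1 (Wk : ℝ → ℝ → ℝ) (t : ℝ) : ℝ :=
  ∫ q in Set.Icc (0 : ℝ) t ×ˢ Set.Icc (0 : ℝ) t, Wk q.1 q.2

/-- `L₂² = ∫_{[0,t]²} W²`. -/
def L2sq (Wk : ℝ → ℝ → ℝ) (t : ℝ) : ℝ :=
  ∫ q in Set.Icc (0 : ℝ) t ×ˢ Set.Icc (0 : ℝ) t, (Wk q.1 q.2) ^ 2

namespace SigSamp

def Qp (N : ℕ) (i : Fin N) (x : ℝ) : ℝ :=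
  ((x - (i : ℝ) / N) ^ 3 - (x - ((i : ℝ) + 1) / N) ^ 3) / 3

lemma cast_last {N : ℕ} {i : Fin N} (h : (i : ℕ) = N - 1) : (i : ℝ) = (N : ℝ) - 1 := by
  have hN : 1 ≤ N := i.pos
  rw [h, Nat.cast_sub hN, Nat.cast_one]

lemma cell_ae {N : ℕ} (i : Fin N) :
    cell N i =ᵐ[volume] Set.Ioc ((i : ℝ) / N) (((i : ℝ) + 1) / N) := by
  unfold cell
  split_ifs with h
  · have hN : (0:ℝ) < N := by exact_mod_cast i.pos
    have h1 : ((N : ℝ) - 1) / N = (i : ℝ) / N := by rw [cast_last h]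
    have h2 : ((i : ℝ) + 1) / N = 1 := by
      rw [cast_last h]; field_simp; ring
    rw [h1, h2]
    exact Ioc_ae_eq_Icc.symm
  · exact Ico_ae_eq_Ioc

lemma measurableSet_cell {N : ℕ} (i : Fin N) : MeasurableSet (cell N i) := by
  unfold cell; split_ifs <;> measurability

lemma cell_subset {N : ℕ} (i : Fin N) : cell N i ⊆ Set.Icc 0 1 := by
  have hN : (0:ℝ) < N := by exact_mod_cast i.pos
  have hi1 : (i : ℝ) + 1 ≤ N := by
    have := i.isLt; exact_mod_cast Nat.succ_le_of_lt this
  unfold cell; split_ifs with h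
  · intro t ht
    refine ⟨le_trans ?_ ht.1, ht.2⟩
    · apply div_nonneg _ hN.le
      have : (1:ℝ) ≤ N := by exact_mod_cast i.pos
      linarith
  · intro t ht
    constructor
    · exact le_trans (div_nonneg (by positivity) hN.le) ht.1
    · refine le_trans ht.2.le ?_
      rw [div_le_one hN]; exact hi1

lemma integral_cell {N : ℕ} (i : Fin N) (x : ℝ) :
    ∫ t in cell N i, (x - t) ^ 2 = Qp N i x := by
  have hN : (0:ℝ) < N := by exact_mod_cast i.pos
  have hab : (i : ℝ) / N ≤ ((i : ℝ) + 1) / N := by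
    gcongr <;> linarith
  rw [setIntegral_congr_set (cell_ae i), ← intervalIntegral.integral_of_le hab,
    intervalIntegral.integral_comp_sub_left (fun u => u ^ 2) x,
    integral_pow]
  unfold Qp
  ring

lemma cell_lower {N : ℕ} {i : Fin N} {t : ℝ} (ht : t ∈ cell N i) : (i : ℝ) / N ≤ t := by
  unfold cell at ht
  split_ifs at ht with h
  · rw [cast_last h]; exact ht.1
  · exact ht.1

lemma cell_upper {N : ℕ} {i : Fin N} {t : ℝ} (h : (i : ℕ) ≠ N - 1) (ht : t ∈ cell N i) :
    t < ((i : ℝ) + 1) / N := by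
  unfold cell at ht
  rw [if_neg h] at ht
  exact ht.2

lemma eq_of_mem_cell {N : ℕ} {i j : Fin N} {t : ℝ}
    (hi : t ∈ cell N i) (hj : t ∈ cell N j) : i = j := by
  have hN : (0:ℝ) < N := by exact_mod_cast i.pos
  by_contra hne
  wlog hlt : (i : ℕ) < (j : ℕ) generalizing i j
  · refine this hj hi (Ne.symm hne) ?_
    rcases Nat.lt_or_ge (j : ℕ) (i : ℕ) with h | h
    · exact h
    · exfalso; apply hne; exact Fin.ext (le_antisymm (Nat.le_of_not_lt hlt) h).symm ▸ rfl
  · have hiN : (i : ℕ) ≠ N - 1 := by have := j.isLt; omega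
    have h1 : t < ((i : ℝ) + 1) / N := cell_upper hiN hi
    have h2 : ((j : ℝ)) / N ≤ t := cell_lower hj
    have h3 : ((i : ℝ) + 1) ≤ (j : ℝ) := by exact_mod_cast hlt
    have : ((i : ℝ) + 1) / N ≤ (j : ℝ) / N := by gcongr
    linarith

lemma exists_mem_cell {N : ℕ} (hN : 0 < N) {t : ℝ} (ht : t ∈ Set.Icc (0:ℝ) 1) :
    ∃ i : Fin N, t ∈ cell N i := by
  have hNR : (0:ℝ) < N := by exact_mod_cast hN
  by_cases h1 : t = 1
  · refine ⟨⟨N - 1, by omega⟩, ?_⟩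
    unfold cell
    rw [if_pos rfl]
    subst h1
    constructor
    · rw [div_le_one hNR]; linarith
    · exact le_refl 1
  · have ht1 : t < 1 := lt_of_le_of_ne ht.2 h1
    have ht0 : (0:ℝ) ≤ (N:ℝ) * t := mul_nonneg hNR.le ht.1
    set j := ⌊(N:ℝ) * t⌋₊ with hj
    have hfl : (j:ℝ) ≤ (N:ℝ) * t := Nat.floor_le ht0
    have hfu : (N:ℝ) * t < (j:ℝ) + 1 := Nat.lt_floor_add_one _
    have hjN : j < N := by
      rw [hj, Nat.floor_lt ht0]
      nlinarith
    refine ⟨⟨j, hjN⟩, ?_⟩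
    unfold cell
    split_ifs with h
    · simp only [Fin.val_mk] at h ⊢
      constructor
      · have : ((N:ℝ) - 1) = (j:ℝ) := by
          have : (j:ℝ) = ((N - 1 : ℕ) : ℝ) := by exact_mod_cast congrArg (Nat.cast (R := ℝ)) h
          rw [this, Nat.cast_sub hN, Nat.cast_one]
        rw [this, div_le_iff₀ hNR]; linarith
      · exact ht.2
    · simp only [Fin.val_mk]
      constructor
      · rw [div_le_iff₀ hNR]; linarith
      · rw [lt_div_iff₀ hNR]; linarith

lemma interp_cell {N : ℕ} (x : Fin N → ℝ) {i : Fin N} {t : ℝ} (hti : t ∈ cell N i) :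
    interp N x t = x i := by
  unfold interp
  rw [Finset.sum_eq_single i]
  · rw [Set.indicator_of_mem hti, mul_one]
  · intro j _ hji
    have : t ∉ cell N j := fun hc => hji (eq_of_mem_cell hc hti)
    rw [Set.indicator_of_notMem this, mul_zero]
  · intro hi; exact absurd (Finset.mem_univ i) hi

lemma Qp_nonneg {N : ℕ} (i : Fin N) (x : ℝ) : 0 ≤ Qp N i x := by
  rw [← integral_cell]
  apply setIntegral_nonneg (measurableSet_cell i)
  intro t _; positivity

lemma pointwise_bound {N : ℕ} (hN : 0 < N) (As : ℝ) (X : ℝ → ℝ)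
    (hX : ∀ a ∈ Set.Icc (0 : ℝ) 1, ∀ b ∈ Set.Icc (0 : ℝ) 1, |X a - X b| ≤ As * |a - b|)
    (x : Fin N → ℝ) (hx : ∀ i, x i ∈ Set.Icc (0:ℝ) 1) {t : ℝ} (ht : t ∈ Set.Icc (0:ℝ) 1) :
    (interp N (fun i => X (x i)) t - X t) ^ 2
      ≤ ∑ i, (cell N i).indicator (fun s => As ^ 2 * (x i - s) ^ 2) t := by
  obtain ⟨i0, hi0⟩ := exists_mem_cell hN ht
  rw [interp_cell _ hi0]
  have h1 : (X (x i0) - X t) ^ 2 ≤ As ^ 2 * (x i0 - t) ^ 2 := by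
    have h := hX (x i0) (hx i0) t ht
    calc (X (x i0) - X t) ^ 2 = |X (x i0) - X t| ^ 2 := (sq_abs _).symm
      _ ≤ (As * |x i0 - t|) ^ 2 := by
          apply pow_le_pow_left₀ (abs_nonneg _) h
      _ = As ^ 2 * (x i0 - t) ^ 2 := by rw [mul_pow, sq_abs]
  calc (X (x i0) - X t) ^ 2 ≤ As ^ 2 * (x i0 - t) ^ 2 := h1
    _ = (cell N i0).indicator (fun s => As ^ 2 * (x i0 - s) ^ 2) t := by
        rw [Set.indicator_of_mem hi0]
    _ ≤ ∑ i, (cell N i).indicator (fun s => As ^ 2 * (x i - s) ^ 2) t := by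
        apply Finset.single_le_sum (f := fun i => (cell N i).indicator (fun s => As ^ 2 * (x i - s) ^ 2) t)
          (fun i _ => Set.indicator_nonneg (fun s _ => by positivity) t) (Finset.mem_univ i0)

lemma l2_le {N : ℕ} (hN : 0 < N) (As : ℝ) (X : ℝ → ℝ)
    (hX : ∀ a ∈ Set.Icc (0 : ℝ) 1, ∀ b ∈ Set.Icc (0 : ℝ) 1, |X a - X b| ≤ As * |a - b|)
    (x : Fin N → ℝ) (hx : ∀ i, x i ∈ Set.Icc (0:ℝ) 1) :
    l2 (fun t => interp N (fun i => X (x i)) t - X t)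
      ≤ |As| * Real.sqrt (∑ i, Qp N i (x i)) := by
  have hg : Integrable (fun t => ∑ i, (cell N i).indicator (fun s => As ^ 2 * (x i - s) ^ 2) t)
      (volume.restrict (Set.Icc (0:ℝ) 1)) := by
    apply integrable_finset_sum _ (fun i _ => ?_)
    have hc : IntegrableOn (fun s => As ^ 2 * (x i - s) ^ 2) (Set.Icc (0:ℝ) 1) volume := by
      apply Continuous.integrableOn_Icc; continuity
    exact hc.indicator (measurableSet_cell i)
  have key : (∫ t in Set.Icc (0:ℝ) 1, (interp N (fun i => X (x i)) t - X t) ^ 2)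
      ≤ As ^ 2 * ∑ i, Qp N i (x i) := by
    calc (∫ t in Set.Icc (0:ℝ) 1, (interp N (fun i => X (x i)) t - X t) ^ 2)
        ≤ ∫ t in Set.Icc (0:ℝ) 1,
            ∑ i, (cell N i).indicator (fun s => As ^ 2 * (x i - s) ^ 2) t := by
          apply integral_mono_of_nonneg (ae_of_all _ fun t => sq_nonneg _) hg
          filter_upwards [ae_restrict_mem measurableSet_Icc] with t ht
          exact pointwise_bound hN As X hX x hx ht
      _ = ∑ i, ∫ t in Set.Icc (0:ℝ) 1,
            (cell N i).indicator (fun s => As ^ 2 * (x i - s) ^ 2) t := by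
          apply integral_finset_sum
          intro i _
          have hc : IntegrableOn (fun s => As ^ 2 * (x i - s) ^ 2) (Set.Icc (0:ℝ) 1) volume := by
            apply Continuous.integrableOn_Icc; continuity
          exact hc.indicator (measurableSet_cell i)
      _ = ∑ i, As ^ 2 * Qp N i (x i) := by
          apply Finset.sum_congr rfl
          intro i _
          rw [integral_indicator (measurableSet_cell i),
            Measure.restrict_restrict (measurableSet_cell i),
            Set.inter_eq_self_of_subset_left (cell_subset i),
            integral_const_mul, integral_cell]
      _ = As ^ 2 * ∑ i, Qp N i (x i) := (Finset.mul_sum _ _ _).symm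
  unfold l2
  refine le_trans (Real.sqrt_le_sqrt key) ?_
  rw [Real.sqrt_mul (sq_nonneg As), Real.sqrt_sq_eq_abs]

lemma sum_perm {N : ℕ} {w x : Fin N → ℝ} (σ : Equiv.Perm (Fin N))
    (hw : ∀ i, w i = x (σ i)) (f : ℝ → ℝ) : ∑ i, f (w i) = ∑ j, f (x j) := by
  calc ∑ i, f (w i) = ∑ i, (fun j => f (x j)) (σ i) := by
        apply Finset.sum_congr rfl; intro i _; rw [hw]
    _ = ∑ j, f (x j) := Equiv.sum_comp σ (fun j => f (x j))

lemma rank_eq {N : ℕ} {w x : Fin N → ℝ} (σ : Equiv.Perm (Fin N))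
    (hw : ∀ i, w i = x (σ i)) (hmono : Monotone w) (hx : Function.Injective x) (i : Fin N) :
    (Finset.univ.filter (fun k => x k < w i)).card = (i : ℕ) := by
  have hwinj : Function.Injective w := by
    intro a b hab
    rw [hw a, hw b] at hab
    exact σ.injective (hx hab)
  have step1 : (Finset.univ.filter (fun k => x k < w i)).card
      = (Finset.univ.filter (fun m => w m < w i)).card := by
    apply Finset.card_bij' (fun k _ => σ.symm k) (fun m _ => σ m)
    · intro k hk
      simp only [Finset.mem_filter, Finset.mem_univ, true_and] at hk ⊢
      rw [hw, Equiv.apply_symm_apply]; exact hk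
    · intro m hm
      simp only [Finset.mem_filter, Finset.mem_univ, true_and] at hm ⊢
      rw [← hw]; exact hm
    · intro k _; exact Equiv.apply_symm_apply σ k
    · intro m _; exact Equiv.symm_apply_apply σ m
  have step2 : Finset.univ.filter (fun m => w m < w i) = Finset.Iio i := by
    ext m
    simp only [Finset.mem_filter, Finset.mem_univ, true_and, Finset.mem_Iio]
    constructor
    · intro h
      by_contra hc
      exact absurd (hmono (le_of_not_gt hc)) (not_le_of_gt h)
    · intro h
      exact lt_of_le_of_ne (hmono h.le) (fun he => absurd (hwinj he) (ne_of_lt h))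
  rw [step1, step2, Fin.card_Iio]

lemma sum_idx_mul {N : ℕ} {w x : Fin N → ℝ} (σ : Equiv.Perm (Fin N))
    (hw : ∀ i, w i = x (σ i)) (hmono : Monotone w) (hx : Function.Injective x) :
    ∑ i : Fin N, ((i : ℕ) : ℝ) * w i = ∑ j, ∑ k, x j * (if x k < x j then (1:ℝ) else 0) := by
  have hcard : ∀ c : ℝ, ∑ k, (if x k < c then (1:ℝ) else 0)
      = ((Finset.univ.filter (fun k => x k < c)).card : ℝ) := by
    intro c; rw [Finset.sum_boole]
  calc ∑ i : Fin N, ((i : ℕ) : ℝ) * w i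
      = ∑ i, (fun j => x j * ((Finset.univ.filter (fun k => x k < x j)).card : ℝ)) (σ i) := by
        apply Finset.sum_congr rfl
        intro i _
        simp only
        rw [← hw, rank_eq σ hw hmono hx, mul_comm]
    _ = ∑ j, x j * ((Finset.univ.filter (fun k => x k < x j)).card : ℝ) := Equiv.sum_comp σ (fun j => x j * ((Finset.univ.filter (fun k => x k < x j)).card : ℝ))
    _ = ∑ j, ∑ k, x j * (if x k < x j then (1:ℝ) else 0) := by
        apply Finset.sum_congr rfl
        intro j _
        rw [← Finset.mul_sum, hcard]

section Prob

variable {Ω : Type*} [MeasurableSpace Ω] {μ : Measure Ω} [IsProbabilityMeasure μ]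
  {N : ℕ} {v : Fin N → Ω → ℝ}

/-- abbreviation for uniform law -/
def unif : Measure ℝ := volume.restrict (Set.Icc (0:ℝ) 1)

lemma ae_mem_Icc (hm : ∀ i, Measurable (v i))
    (hmap : ∀ i, μ.map (v i) = volume.restrict (Set.Icc (0:ℝ) 1)) (j : Fin N) :
    ∀ᵐ ω ∂μ, v j ω ∈ Set.Icc (0:ℝ) 1 := by
  rw [ae_iff]
  have : {ω | ¬ v j ω ∈ Set.Icc (0:ℝ) 1} = (v j) ⁻¹' (Set.Icc (0:ℝ) 1)ᶜ := rfl
  rw [this, ← Measure.map_apply (hm j) measurableSet_Icc.compl, hmap j,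
    Measure.restrict_apply measurableSet_Icc.compl, Set.compl_inter_self, measure_empty]

lemma integral_comp_unif (hm : ∀ i, Measurable (v i))
    (hmap : ∀ i, μ.map (v i) = volume.restrict (Set.Icc (0:ℝ) 1)) (j : Fin N)
    (f : ℝ → ℝ) (hf : Continuous f) :
    ∫ ω, f (v j ω) ∂μ = ∫ t in Set.Icc (0:ℝ) 1, f t := by
  rw [← hmap j, integral_map (hm j).aemeasurable hf.aestronglyMeasurable]

lemma integral_id_unif : ∫ t in Set.Icc (0:ℝ) 1, t = 1/2 := by
  rw [integral_Icc_eq_integral_Ioc, ← intervalIntegral.integral_of_le (by norm_num : (0:ℝ) ≤ 1),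
    integral_id]
  norm_num

lemma integral_sq_unif : ∫ t in Set.Icc (0:ℝ) 1, t ^ 2 = 1/3 := by
  rw [integral_Icc_eq_integral_Ioc, ← intervalIntegral.integral_of_le (by norm_num : (0:ℝ) ≤ 1),
    integral_pow]
  norm_num

lemma Ev (hm : ∀ i, Measurable (v i))
    (hmap : ∀ i, μ.map (v i) = volume.restrict (Set.Icc (0:ℝ) 1)) (j : Fin N) :
    ∫ ω, v j ω ∂μ = 1/2 := by
  rw [integral_comp_unif hm hmap j (fun t => t) continuous_id, integral_id_unif]

lemma Evsq (hm : ∀ i, Measurable (v i))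
    (hmap : ∀ i, μ.map (v i) = volume.restrict (Set.Icc (0:ℝ) 1)) (j : Fin N) :
    ∫ ω, (v j ω) ^ 2 ∂μ = 1/3 := by
  rw [integral_comp_unif hm hmap j (fun t => t ^ 2) (by continuity), integral_sq_unif]

lemma pair_law (hm : ∀ i, Measurable (v i))
    (hmap : ∀ i, μ.map (v i) = volume.restrict (Set.Icc (0:ℝ) 1))
    (hind : iIndepFun v μ) {j k : Fin N} (hjk : j ≠ k) :
    μ.map (fun ω => (v j ω, v k ω))
      = (volume.restrict (Set.Icc (0:ℝ) 1)).prod (volume.restrict (Set.Icc (0:ℝ) 1)) := by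
  have h := hind.indepFun hjk
  rw [indepFun_iff_map_prod_eq_prod_map_map (hm j).aemeasurable (hm k).aemeasurable] at h
  rw [h, hmap j, hmap k]

lemma Epair (hm : ∀ i, Measurable (v i))
    (hmap : ∀ i, μ.map (v i) = volume.restrict (Set.Icc (0:ℝ) 1))
    (hind : iIndepFun v μ) {j k : Fin N} (hjk : j ≠ k) :
    ∫ ω, v j ω * (if v k ω < v j ω then (1:ℝ) else 0) ∂μ = 1/3 := by
  set ρ := volume.restrict (Set.Icc (0:ℝ) 1) with hρ
  set f : ℝ × ℝ → ℝ := fun p => p.1 * (if p.2 < p.1 then (1:ℝ) else 0) with hf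
  have hfm : Measurable f := by
    apply Measurable.mul measurable_fst
    exact Measurable.ite (measurableSet_lt measurable_snd measurable_fst)
      measurable_const measurable_const
  have hpm : Measurable (fun ω => (v j ω, v k ω)) := (hm j).prodMk (hm k)
  have h1 : ∫ ω, v j ω * (if v k ω < v j ω then (1:ℝ) else 0) ∂μ = ∫ p, f p ∂(ρ.prod ρ) := by
    rw [← pair_law hm hmap hind hjk, integral_map hpm.aemeasurable hfm.aestronglyMeasurable]
  rw [h1]
  have hfin : Integrable f (ρ.prod ρ) := by
    apply Integrable.mono' (integrable_const (1:ℝ)) hfm.aestronglyMeasurable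
    rw [hρ, Measure.prod_restrict]
    filter_upwards [ae_restrict_mem (measurableSet_Icc.prod measurableSet_Icc)] with p hp
    obtain ⟨hp1, hp2⟩ := hp
    have : |f p| ≤ |p.1| * 1 := by
      rw [hf]; simp only [abs_mul]
      apply mul_le_mul_of_nonneg_left _ (abs_nonneg _)
      split_ifs <;> simp
    have h3 : |p.1| ≤ 1 := abs_le.mpr ⟨by linarith [hp1.1], hp1.2⟩
    calc ‖f p‖ = |f p| := rfl
      _ ≤ |p.1| * 1 := this
      _ ≤ 1 := by linarith
  rw [integral_prod f hfin]
  have inner : ∀ᵐ s ∂ρ, (∫ t, f (s, t) ∂ρ) = s ^ 2 := by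
    rw [hρ]
    filter_upwards [ae_restrict_mem measurableSet_Icc] with s hs
    have heq : (fun t => f (s, t)) = fun t => s * (Set.Iio s).indicator (fun _ => (1:ℝ)) t := by
      funext t
      rw [hf]
      simp only [Set.indicator_apply, Set.mem_Iio]
    rw [heq, integral_const_mul, integral_indicator measurableSet_Iio,
      Measure.restrict_restrict measurableSet_Iio]
    have hset : Set.Iio s ∩ Set.Icc (0:ℝ) 1 = Set.Ico 0 s := by
      ext t
      simp only [Set.mem_inter_iff, Set.mem_Iio, Set.mem_Icc, Set.mem_Ico]
      constructor
      · rintro ⟨h1, h2, _⟩; exact ⟨h2, h1⟩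
      · rintro ⟨h1, h2⟩; exact ⟨h2, h1, le_trans h2.le hs.2⟩
    rw [hset]
    rw [setIntegral_const, Real.volume_real_Ico_of_le (by linarith [hs.1]), smul_eq_mul]
    ring
  rw [integral_congr_ae inner, hρ, integral_sq_unif]

lemma ae_ne (hm : ∀ i, Measurable (v i))
    (hmap : ∀ i, μ.map (v i) = volume.restrict (Set.Icc (0:ℝ) 1))
    (hind : iIndepFun v μ) {j k : Fin N} (hjk : j ≠ k) :
    ∀ᵐ ω ∂μ, v j ω ≠ v k ω := by
  set ρ := volume.restrict (Set.Icc (0:ℝ) 1) with hρ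
  have hpm : Measurable (fun ω => (v j ω, v k ω)) := (hm j).prodMk (hm k)
  have hD : MeasurableSet {p : ℝ × ℝ | p.1 = p.2} :=
    measurableSet_eq_fun measurable_fst measurable_snd
  rw [ae_iff]
  have hset : {ω | ¬ v j ω ≠ v k ω} = (fun ω => (v j ω, v k ω)) ⁻¹' {p | p.1 = p.2} := by
    ext ω; simp [not_not]
  rw [hset, ← Measure.map_apply hpm hD, pair_law hm hmap hind hjk, ← hρ,
    Measure.prod_apply hD]
  have : ∀ s : ℝ, ρ (Prod.mk s ⁻¹' {p : ℝ × ℝ | p.1 = p.2}) = 0 := by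
    intro s
    have : Prod.mk s ⁻¹' {p : ℝ × ℝ | p.1 = p.2} = {s} := by
      ext t; simp [eq_comm]
    rw [this, hρ, Measure.restrict_apply (measurableSet_singleton s)]
    exact measure_mono_null Set.inter_subset_left (Real.volume_singleton)
  simp only [this, lintegral_zero]

def Gfun (v : Fin N → Ω → ℝ) (ω : Ω) : ℝ :=
  (∑ j, (v j ω) ^ 2) / (N:ℝ)
    - (2 * (∑ j, ∑ k, v j ω * (if v k ω < v j ω then (1:ℝ) else 0)) + ∑ j, v j ω) / (N:ℝ) ^ 2
    + 1/3

lemma integrable_vsq (hm : ∀ i, Measurable (v i))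
    (hmap : ∀ i, μ.map (v i) = volume.restrict (Set.Icc (0:ℝ) 1)) (j : Fin N) :
    Integrable (fun ω => (v j ω) ^ 2) μ := by
  apply Integrable.mono' (integrable_const (1:ℝ))
    ((hm j).pow_const 2).aestronglyMeasurable
  filter_upwards [ae_mem_Icc hm hmap j] with ω h
  rw [Real.norm_eq_abs, abs_of_nonneg (sq_nonneg _)]
  nlinarith [h.1, h.2]

lemma integrable_v (hm : ∀ i, Measurable (v i))
    (hmap : ∀ i, μ.map (v i) = volume.restrict (Set.Icc (0:ℝ) 1)) (j : Fin N) :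
    Integrable (fun ω => v j ω) μ := by
  apply Integrable.mono' (integrable_const (1:ℝ)) (hm j).aestronglyMeasurable
  filter_upwards [ae_mem_Icc hm hmap j] with ω h
  rw [Real.norm_eq_abs]
  exact abs_le.mpr ⟨by linarith [h.1], h.2⟩

lemma integrable_pairterm (hm : ∀ i, Measurable (v i))
    (hmap : ∀ i, μ.map (v i) = volume.restrict (Set.Icc (0:ℝ) 1)) (j k : Fin N) :
    Integrable (fun ω => v j ω * (if v k ω < v j ω then (1:ℝ) else 0)) μ := by
  apply Integrable.mono' (integrable_const (1:ℝ))
  · exact ((hm j).mul (Measurable.ite (measurableSet_lt (hm k) (hm j))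
      measurable_const measurable_const)).aestronglyMeasurable
  filter_upwards [ae_mem_Icc hm hmap j] with ω h
  rw [Real.norm_eq_abs, abs_mul]
  have h1 : |v j ω| ≤ 1 := abs_le.mpr ⟨by linarith [h.1], h.2⟩
  have h2 : |(if v k ω < v j ω then (1:ℝ) else 0)| ≤ 1 := by split_ifs <;> simp
  calc |v j ω| * |(if v k ω < v j ω then (1:ℝ) else 0)| ≤ 1 * 1 := by
        apply mul_le_mul h1 h2 (abs_nonneg _) zero_le_one
    _ = 1 := by norm_num

lemma integrable_G (hm : ∀ i, Measurable (v i))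
    (hmap : ∀ i, μ.map (v i) = volume.restrict (Set.Icc (0:ℝ) 1)) :
    Integrable (Gfun v) μ := by
  have hA : Integrable (fun ω => ∑ j, (v j ω) ^ 2) μ :=
    integrable_finset_sum _ (fun j _ => integrable_vsq hm hmap j)
  have hB : Integrable (fun ω => ∑ j, ∑ k, v j ω * (if v k ω < v j ω then (1:ℝ) else 0)) μ :=
    integrable_finset_sum _ (fun j _ =>
      integrable_finset_sum _ (fun k _ => integrable_pairterm hm hmap j k))
  have hC : Integrable (fun ω => ∑ j, v j ω) μ :=
    integrable_finset_sum _ (fun j _ => integrable_v hm hmap j)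
  exact (((hA.div_const _).sub (((hB.const_mul 2).add hC).div_const _)).add
    (integrable_const (1/3)))

lemma integral_G (hN : 0 < N) (hm : ∀ i, Measurable (v i))
    (hmap : ∀ i, μ.map (v i) = volume.restrict (Set.Icc (0:ℝ) 1))
    (hind : iIndepFun v μ) :
    ∫ ω, Gfun v ω ∂μ = 1 / (6 * N) := by
  have hA : Integrable (fun ω => ∑ j, (v j ω) ^ 2) μ :=
    integrable_finset_sum _ (fun j _ => integrable_vsq hm hmap j)
  have hB : Integrable (fun ω => ∑ j, ∑ k, v j ω * (if v k ω < v j ω then (1:ℝ) else 0)) μ :=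
    integrable_finset_sum _ (fun j _ =>
      integrable_finset_sum _ (fun k _ => integrable_pairterm hm hmap j k))
  have hC : Integrable (fun ω => ∑ j, v j ω) μ :=
    integrable_finset_sum _ (fun j _ => integrable_v hm hmap j)
  have hIA : ∫ ω, (∑ j, (v j ω) ^ 2) ∂μ = (N:ℝ) / 3 := by
    rw [integral_finset_sum _ (fun j _ => integrable_vsq hm hmap j)]
    rw [Finset.sum_congr rfl (fun j _ => Evsq hm hmap j)]
    simp [Finset.sum_const, Finset.card_univ]
    ring
  have hIC : ∫ ω, (∑ j, v j ω) ∂μ = (N:ℝ) / 2 := by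
    rw [integral_finset_sum _ (fun j _ => integrable_v hm hmap j)]
    rw [Finset.sum_congr rfl (fun j _ => Ev hm hmap j)]
    simp [Finset.sum_const, Finset.card_univ]
    ring
  have hIB : ∫ ω, (∑ j, ∑ k, v j ω * (if v k ω < v j ω then (1:ℝ) else 0)) ∂μ
      = (N:ℝ) * ((N:ℝ) - 1) / 3 := by
    rw [integral_finset_sum _ (fun j _ =>
      integrable_finset_sum _ (fun k _ => integrable_pairterm hm hmap j k))]
    have hinner : ∀ j : Fin N,
        ∫ ω, (∑ k, v j ω * (if v k ω < v j ω then (1:ℝ) else 0)) ∂μ = ((N:ℝ) - 1) / 3 := by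
      intro j
      rw [integral_finset_sum _ (fun k _ => integrable_pairterm hm hmap j k)]
      rw [← Finset.sum_erase_add _ _ (Finset.mem_univ j)]
      have hjj : ∫ ω, v j ω * (if v j ω < v j ω then (1:ℝ) else 0) ∂μ = 0 := by
        simp [lt_irrefl]
      rw [hjj, add_zero]
      rw [Finset.sum_congr rfl (fun k hk => Epair hm hmap hind
        (Ne.symm (Finset.ne_of_mem_erase hk)))]
      rw [Finset.sum_const, Finset.card_erase_of_mem (Finset.mem_univ j), Finset.card_univ,
        Fintype.card_fin, nsmul_eq_mul, Nat.cast_sub hN, Nat.cast_one]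
      ring
    rw [Finset.sum_congr rfl (fun j _ => hinner j)]
    simp [Finset.sum_const, Finset.card_univ]
    ring
  have hBC : Integrable (fun ω =>
      2 * (∑ j, ∑ k, v j ω * (if v k ω < v j ω then (1:ℝ) else 0)) + ∑ j, v j ω) μ := by
    exact (hB.const_mul 2).add hC
  have hG1 : Integrable (fun ω => (∑ j, (v j ω) ^ 2) / (N:ℝ)
      - (2 * (∑ j, ∑ k, v j ω * (if v k ω < v j ω then (1:ℝ) else 0)) + ∑ j, v j ω)
        / (N:ℝ) ^ 2) μ := by
    exact (hA.div_const _).sub (hBC.div_const _)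
  unfold Gfun
  rw [integral_add hG1 (integrable_const (1/3)),
    integral_sub (hA.div_const _) (hBC.div_const _),
    integral_div, integral_div, integral_add (hB.const_mul 2) hC, integral_const_mul,
    integral_const, hIA, hIB, hIC]
  simp only [measure_univ, probReal_univ, ENNReal.toReal_one, smul_eq_mul, one_mul]
  have hNR : (0:ℝ) < N := by exact_mod_cast hN
  field_simp
  ring

end Prob

lemma Qp_expand {N : ℕ} (i : Fin N) (x : ℝ) :
    Qp N i x = x ^ 2 / N - ((2 * ((i:ℕ):ℝ) + 1) * x) / N ^ 2
      + ((((i:ℕ):ℝ) + 1) ^ 3 - ((i:ℕ):ℝ) ^ 3) / (3 * N ^ 3) := by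
  have hN : (0:ℝ) < N := by exact_mod_cast i.pos
  unfold Qp
  field_simp
  ring

lemma telescope (N : ℕ) : ∑ i : Fin N, ((((i:ℕ):ℝ) + 1) ^ 3 - ((i:ℕ):ℝ) ^ 3) = (N:ℝ) ^ 3 := by
  rw [Fin.sum_univ_eq_sum_range (fun k : ℕ => (((k:ℕ):ℝ) + 1) ^ 3 - ((k:ℕ):ℝ) ^ 3) N]
  have h := Finset.sum_range_sub (fun k : ℕ => ((k:ℝ)) ^ 3) N
  simp only [Nat.cast_add, Nat.cast_one] at h
  rw [h]
  norm_num

lemma sumQp {N : ℕ} (hN : 0 < N) (y : Fin N → ℝ) :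
    ∑ i, Qp N i (y i) = (∑ i, (y i) ^ 2) / N
      - (2 * (∑ i : Fin N, ((i:ℕ):ℝ) * y i) + ∑ i, y i) / N ^ 2 + 1/3 := by
  have hNR : (0:ℝ) < N := by exact_mod_cast hN
  have step : ∀ i : Fin N, Qp N i (y i)
      = (y i) ^ 2 / N - (2 * (((i:ℕ):ℝ) * y i) + y i) / N ^ 2
        + ((((i:ℕ):ℝ) + 1) ^ 3 - ((i:ℕ):ℝ) ^ 3) / (3 * N ^ 3) := by
    intro i
    rw [Qp_expand]
    ring
  rw [Finset.sum_congr rfl (fun i _ => step i)]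
  rw [Finset.sum_add_distrib, Finset.sum_sub_distrib, ← Finset.sum_div, ← Finset.sum_div,
    ← Finset.sum_div, telescope, Finset.sum_add_distrib, ← Finset.mul_sum]
  congr 1
  field_simp

end SigSamp

open SigSamp

/-- expected L² error of the step interpolation at order statistics of
i.i.d. uniforms: `E‖X̄_N − X‖ ≤ A_s/√(6N)`. -/
theorem expected_signal_sampling_error {Ω : Type*} [MeasurableSpace Ω]
    (μ : Measure Ω) [IsProbabilityMeasure μ]
    (As : ℝ) (X : ℝ → ℝ)
    (hX : ∀ a ∈ Set.Icc (0 : ℝ) 1, ∀ b ∈ Set.Icc (0 : ℝ) 1, |X a - X b| ≤ As * |a - b|)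
    (N : ℕ) (hN : 0 < N)
    (v : Fin N → Ω → ℝ) (hiid : IIDUniform v μ)
    (u : Ω → Fin N → ℝ) (hord : SortedVersion u v) :
    (∫ ω, l2 (fun t => interp N (fun i => X (u ω i)) t - X t) ∂μ)
      ≤ As / Real.sqrt (6 * N) := by
  obtain ⟨hm, hind, hmap⟩ := hiid
  have hNR : (0:ℝ) < N := by exact_mod_cast hN
  have hAs : 0 ≤ As := by
    have h := hX 0 (by norm_num) 1 (by norm_num)
    have h2 : (0:ℝ) ≤ |X 0 - X 1| := abs_nonneg _
    simp only [zero_sub, abs_neg, abs_one, mul_one] at h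
    linarith
  set c := Real.sqrt (1/(6*(N:ℝ))) with hc
  have hc2 : c ^ 2 = 1/(6*(N:ℝ)) := Real.sq_sqrt (by positivity)
  have hcpos : 0 < c := Real.sqrt_pos.mpr (by positivity)
  have hmem : ∀ᵐ ω ∂μ, ∀ j, v j ω ∈ Set.Icc (0:ℝ) 1 :=
    ae_all_iff.mpr (fun j => ae_mem_Icc hm hmap j)
  have hdist : ∀ᵐ ω ∂μ, ∀ j k, j ≠ k → v j ω ≠ v k ω := by
    rw [ae_all_iff]; intro j; rw [ae_all_iff]; intro k
    by_cases hjk : j = k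
    · subst hjk; exact ae_of_all _ (fun ω h => absurd rfl h)
    · exact (ae_ne hm hmap hind hjk).mono (fun ω h _ => h)
  have hbound : ∀ᵐ ω ∂μ, l2 (fun t => interp N (fun i => X (u ω i)) t - X t)
      ≤ (Gfun v ω + c ^ 2) * (As/(2*c)) := by
    filter_upwards [hmem, hdist] with ω h1 h2
    obtain ⟨hmono, σ, hσ⟩ := hord ω
    have hum : ∀ i, u ω i ∈ Set.Icc (0:ℝ) 1 := fun i => hσ i ▸ h1 (σ i)
    have hinj : Function.Injective (fun j => v j ω) := by
      intro a b hab
      by_contra hne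
      exact h2 a b hne hab
    have hW : ∑ i, Qp N i (u ω i) = Gfun v ω := by
      rw [sumQp hN (u ω)]
      unfold Gfun
      rw [sum_perm (x := fun j => v j ω) σ hσ (fun t => t ^ 2),
        sum_perm (x := fun j => v j ω) σ hσ (fun t => t),
        sum_idx_mul (x := fun j => v j ω) σ hσ hmono hinj]
    have hle1 := l2_le hN As X hX (u ω) hum
    have hWnn : 0 ≤ ∑ i, Qp N i (u ω i) := Finset.sum_nonneg fun i _ => Qp_nonneg i _
    have hsq : Real.sqrt (∑ i, Qp N i (u ω i))
        ≤ (∑ i, Qp N i (u ω i) + c ^ 2)/(2*c) := by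
      rw [le_div_iff₀ (by positivity)]
      nlinarith [Real.sq_sqrt hWnn, Real.sqrt_nonneg (∑ i, Qp N i (u ω i)),
        sq_nonneg (Real.sqrt (∑ i, Qp N i (u ω i)) - c)]
    calc l2 (fun t => interp N (fun i => X (u ω i)) t - X t)
        ≤ |As| * Real.sqrt (∑ i, Qp N i (u ω i)) := hle1
      _ = As * Real.sqrt (∑ i, Qp N i (u ω i)) := by rw [abs_of_nonneg hAs]
      _ ≤ As * ((∑ i, Qp N i (u ω i) + c ^ 2)/(2*c)) :=
          mul_le_mul_of_nonneg_left hsq hAs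
      _ = (Gfun v ω + c ^ 2) * (As/(2*c)) := by rw [← hW]; ring
  have hgint : Integrable (fun ω => (Gfun v ω + c ^ 2) * (As/(2*c))) μ :=
    ((integrable_G hm hmap).add (integrable_const _)).mul_const _
  have hmain := integral_mono_of_nonneg
    (ae_of_all _ (fun ω => Real.sqrt_nonneg _)) hgint hbound
  calc (∫ ω, l2 (fun t => interp N (fun i => X (u ω i)) t - X t) ∂μ)
      ≤ ∫ ω, (Gfun v ω + c ^ 2) * (As/(2*c)) ∂μ := hmain
    _ = ((∫ ω, Gfun v ω ∂μ) + c ^ 2) * (As/(2*c)) := by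
        rw [integral_mul_const, integral_add (integrable_G hm hmap) (integrable_const _),
          integral_const]
        simp [measure_univ]
    _ = As / Real.sqrt (6 * N) := by
        rw [integral_G hN hm hmap hind, ← hc2]
        have hs : Real.sqrt (6 * (N:ℝ)) > 0 := Real.sqrt_pos.mpr (by positivity)
        have hcs : c = (Real.sqrt (6 * (N:ℝ)))⁻¹ := by
          rw [hc, one_div, Real.sqrt_inv]
        rw [hcs]
        field_simp
        ring

end
end

section
/- Let W_{ℝ₊}: ℝ₊² → [0,1] be a symmetric measurable kernel with W_{ℝ₊}(u,u) = 0 for all u, let t_N > 0 and W_{N}(u,v) = W_{ℝ₊}(u·t_N, v·t_N). Let u_1 ≤ … ≤ u_N be the order statistics of N i.i.d. Uniform[0,1] random variables, let p_{ij} = W_{N}(u_i,u_j), let edge variables e_{ij} = e_{ji} ∼ Bernoulli(p_{ij}) be conditionally independent for i < j given the u's (with e_{ii} ∼ Bernoulli(p_{ii})), and let W̄_N(u,v) = Σ_{i,j} e_{ij}·1{u ∈ I_i}·1{v ∈ I_j} and P̄_N(u,v) = Σ_{i,j} p_{ij}·1{u ∈ I_i}·1{v ∈ I_j}. Then E‖W̄_N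 − P̄_N‖_{L²([0,1]²)} ≤ √(L₁ − L₂²)/t_N, where L₁ = ∫_{[0,t_N]²} W_{ℝ₊}(u,v) du dv and L₂² = ∫_{[0,t_N]²} W_{ℝ₊}(u,v)² du dv. -/
open MeasureTheory Set ProbabilityTheory

noncomputable section

section Helpers
variable {N : ℕ}

lemma cell_meas (i : Fin N) : MeasurableSet (cell N i) := by
  unfold cell; split <;> [exact measurableSet_Icc; exact measurableSet_Ico]

lemma cell_subset (i : Fin N) : cell N i ⊆ Icc 0 1 := by
  have hN : 0 < N := i.pos
  have hN' : (0:ℝ) < N := by exact_mod_cast hN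
  have hN1 : (1:ℝ) ≤ N := by exact_mod_cast hN
  unfold cell; split
  · intro x hx
    exact ⟨le_trans (div_nonneg (by linarith) hN'.le) hx.1, hx.2⟩
  · intro x hx
    constructor
    · exact le_trans (by positivity) hx.1
    · refine le_trans hx.2.le ?_
      rw [div_le_one hN']
      have : (i:ℝ) + 1 ≤ N := by exact_mod_cast i.2
      linarith

lemma cell_lb (i : Fin N) {x : ℝ} (hx : x ∈ cell N i) : (i:ℝ)/N ≤ x := by
  have hN : 0 < N := i.pos
  unfold cell at hx; split_ifs at hx with h
  · have hi : (i:ℝ) = (N:ℝ) - 1 := by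
      have h2 : (i:ℕ) + 1 = N := by omega
      have := congrArg (Nat.cast : ℕ → ℝ) h2; push_cast at this; linarith
    rw [hi]; exact hx.1
  · exact hx.1

lemma cell_ub {i : Fin N} {x : ℝ} (hx : x ∈ cell N i) (h : (i:ℕ) < N - 1) :
    x < ((i:ℝ)+1)/N := by
  unfold cell at hx; rw [if_neg (by omega)] at hx; exact hx.2

lemma cell_disjoint {i j : Fin N} (hij : i ≠ j) {x : ℝ} (hx : x ∈ cell N i) :
    x ∉ cell N j := by
  intro hy
  have hN : 0 < N := i.pos
  have hN' : (0:ℝ) < N := by exact_mod_cast hN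
  rcases lt_or_gt_of_ne (fun h => hij (Fin.ext h) : (i:ℕ) ≠ (j:ℕ)) with h | h
  · have h1 : x < ((i:ℝ)+1)/N := cell_ub hx (by omega)
    have h2 : (j:ℝ)/N ≤ x := cell_lb j hy
    have h3 : ((i:ℝ)+1) ≤ (j:ℝ) := by exact_mod_cast h
    have : ((i:ℝ)+1)/N ≤ (j:ℝ)/N := by gcongr
    linarith
  · have h1 : x < ((j:ℝ)+1)/N := cell_ub hy (by omega)
    have h2 : (i:ℝ)/N ≤ x := cell_lb i hx
    have h3 : ((j:ℝ)+1) ≤ (i:ℝ) := by exact_mod_cast h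
    have : ((j:ℝ)+1)/N ≤ (i:ℝ)/N := by gcongr
    linarith

lemma cell_exists (hN : 0 < N) {x : ℝ} (hx : x ∈ Icc (0:ℝ) 1) :
    ∃ i : Fin N, x ∈ cell N i := by
  have hN' : (0:ℝ) < N := by exact_mod_cast hN
  set k := min (⌊x * N⌋₊) (N-1) with hk
  refine ⟨⟨k, by omega⟩, ?_⟩
  have hxN : 0 ≤ x * N := mul_nonneg hx.1 hN'.le
  by_cases h : ⌊x * N⌋₊ ≥ N - 1
  · have hkk : k = N - 1 := by omega
    unfold cell
    rw [if_pos (by simpa using hkk)]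
    refine ⟨?_, hx.2⟩
    rw [div_le_iff₀ hN']
    have h5 : ((N:ℝ) - 1) ≤ ⌊x*N⌋₊ := by
      have h4 : ((N-1:ℕ):ℝ) ≤ (⌊x*N⌋₊:ℝ) := by exact_mod_cast h
      push_cast [Nat.cast_sub hN] at h4; linarith
    calc ((N:ℝ)-1) ≤ (⌊x*N⌋₊:ℝ) := h5
      _ ≤ x * N := Nat.floor_le hxN
  · push_neg at h
    have hkk : k = ⌊x*N⌋₊ := by omega
    have hcast : ((⟨k, by omega⟩ : Fin N) : ℕ) = ⌊x*N⌋₊ := hkk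
    unfold cell
    rw [if_neg (by rw [hcast]; omega)]
    rw [mem_Ico, hcast]
    constructor
    · rw [div_le_iff₀ hN']
      exact Nat.floor_le hxN
    · rw [lt_div_iff₀ hN']
      exact_mod_cast Nat.lt_floor_add_one (x*N)


lemma cell_volume (i : Fin N) : volume (cell N i) = ENNReal.ofReal (1/N) := by
  have hN : 0 < N := i.pos
  have hN' : (0:ℝ) < N := by exact_mod_cast hN
  unfold cell; split
  · rw [Real.volume_Icc]
    congr 1
    rw [sub_div, div_self hN'.ne']
    ring
  · rw [Real.volume_Ico]
    congr 1
    rw [add_div]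
    ring

lemma interp_eval (A : Fin N → Fin N → ℝ) {x y : ℝ} {i j : Fin N}
    (hx : x ∈ cell N i) (hy : y ∈ cell N j) :
    interp2 N A x y = A i j := by
  have hdx : ∀ k : Fin N, k ≠ i → x ∉ cell N k := fun k hk h => cell_disjoint hk h hx
  have hdy : ∀ k : Fin N, k ≠ j → y ∉ cell N k := fun k hk h => cell_disjoint hk h hy
  unfold interp2
  rw [Finset.sum_eq_single i]
  · rw [Finset.sum_eq_single j]
    · rw [Set.indicator_of_mem hx, Set.indicator_of_mem hy]; ring
    · intro k _ hk
      rw [Set.indicator_of_notMem (hdy k hk)]; ring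
    · intro h; exact absurd (Finset.mem_univ j) h
  · intro k _ hk
    rw [Finset.sum_eq_zero]
    intro l _
    rw [Set.indicator_of_notMem (hdx k hk)]; ring
  · intro h; exact absurd (Finset.mem_univ i) h

lemma interp2_sq {A : Fin N → Fin N → ℝ} {x y : ℝ}
    (hx : x ∈ Icc (0:ℝ) 1) (hy : y ∈ Icc (0:ℝ) 1) (hN : 0 < N) :
    (interp2 N A x y)^2 = interp2 N (fun i j => (A i j)^2) x y := by
  obtain ⟨i, hi⟩ := cell_exists hN hx
  obtain ⟨j, hj⟩ := cell_exists hN hy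
  rw [interp_eval A hi hj, interp_eval _ hi hj]

lemma interp2_meas (A : Fin N → Fin N → ℝ) :
    Measurable (fun q : ℝ × ℝ => interp2 N A q.1 q.2) := by
  unfold interp2
  refine Finset.measurable_sum _ (fun i _ => Finset.measurable_sum _ (fun j _ => ?_))
  exact ((measurable_const.mul
      ((measurable_const.indicator (cell_meas i)).comp measurable_fst)).mul
      ((measurable_const.indicator (cell_meas j)).comp measurable_snd))

lemma integral_interp2 (hN : 0 < N) (B : Fin N → Fin N → ℝ) :
    ∫ q in (Icc (0:ℝ) 1) ×ˢ (Icc (0:ℝ) 1), interp2 N B q.1 q.2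
      = (∑ i, ∑ j, B i j) / (N:ℝ)^2 := by
  have hbox : MeasurableSet ((Icc (0:ℝ) 1) ×ˢ (Icc (0:ℝ) 1)) :=
    measurableSet_Icc.prod measurableSet_Icc
  have hint : ∀ (i j : Fin N), IntegrableOn
      (fun q : ℝ × ℝ => B i j * (cell N i).indicator (fun _ => (1:ℝ)) q.1 *
        (cell N j).indicator (fun _ => (1:ℝ)) q.2)
      ((Icc (0:ℝ) 1) ×ˢ (Icc (0:ℝ) 1)) volume := by
    intro i j
    have hfinvol : IsFiniteMeasure (volume.restrict ((Icc (0:ℝ) 1) ×ˢ (Icc (0:ℝ) 1))) := by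
      constructor
      rw [Measure.restrict_apply_univ, Measure.volume_eq_prod, Measure.prod_prod,
        Real.volume_Icc]
      simp
    refine Integrable.mono' (integrable_const (|B i j|)) ?_ ?_
    · refine AEStronglyMeasurable.restrict ?_
      exact ((measurable_const.mul
        ((measurable_const.indicator (cell_meas i)).comp measurable_fst)).mul
        ((measurable_const.indicator (cell_meas j)).comp measurable_snd)).aestronglyMeasurable
    · refine Filter.Eventually.of_forall (fun q => ?_)
      rw [Real.norm_eq_abs, abs_mul, abs_mul]
      have h1 : |(cell N i).indicator (fun _ => (1:ℝ)) q.1| ≤ 1 := by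
        rw [Set.indicator]; split <;> simp
      have h2 : |(cell N j).indicator (fun _ => (1:ℝ)) q.2| ≤ 1 := by
        rw [Set.indicator]; split <;> simp
      calc |B i j| * |(cell N i).indicator (fun _ => (1:ℝ)) q.1| *
            |(cell N j).indicator (fun _ => (1:ℝ)) q.2|
          ≤ |B i j| * 1 * 1 := by
            apply mul_le_mul (mul_le_mul le_rfl h1 (abs_nonneg _) (abs_nonneg _)) h2
              (abs_nonneg _) (by positivity)
        _ = |B i j| := by ring
  unfold interp2
  rw [integral_finset_sum]
  swap
  · intro i _
    exact (integrable_finset_sum _ (fun j _ => hint i j))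
  have key : ∀ i : Fin N, ∫ q in (Icc (0:ℝ) 1) ×ˢ (Icc (0:ℝ) 1),
      (∑ j, B i j * (cell N i).indicator (fun _ => (1:ℝ)) q.1 *
        (cell N j).indicator (fun _ => (1:ℝ)) q.2)
      = ∑ j : Fin N, B i j / (N:ℝ)^2 := by
    intro i
    rw [integral_finset_sum _ (fun j _ => hint i j)]
    refine Finset.sum_congr rfl (fun j _ => ?_)
    have hind : ∀ q : ℝ × ℝ, B i j * (cell N i).indicator (fun _ => (1:ℝ)) q.1 *
        (cell N j).indicator (fun _ => (1:ℝ)) q.2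
        = B i j * ((cell N i) ×ˢ (cell N j)).indicator (fun _ => (1:ℝ)) q := by
      intro q
      rw [mul_assoc]
      congr 1
      by_cases h1 : q.1 ∈ cell N i <;> by_cases h2 : q.2 ∈ cell N j <;>
        simp [Set.indicator, Set.mem_prod, h1, h2]
    simp_rw [hind]
    rw [integral_const_mul, setIntegral_indicator ((cell_meas i).prod (cell_meas j))]
    rw [setIntegral_const]
    have hsub : (cell N i) ×ˢ (cell N j) ⊆ (Icc (0:ℝ) 1) ×ˢ (Icc (0:ℝ) 1) :=
      Set.prod_mono (cell_subset i) (cell_subset j)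
    rw [Set.inter_eq_right.mpr hsub]
    rw [Measure.volume_eq_prod, measureReal_def, Measure.prod_prod, cell_volume, cell_volume]
    rw [← ENNReal.ofReal_mul (by positivity)]
    rw [ENNReal.toReal_ofReal (by positivity)]
    have hN' : (0:ℝ) < N := by exact_mod_cast hN
    rw [smul_eq_mul]
    ring
  simp_rw [key]
  rw [Finset.sum_div]
  refine Finset.sum_congr rfl (fun i _ => ?_)
  rw [Finset.sum_div]

lemma kl2_interp2 (hN : 0 < N) (A : Fin N → Fin N → ℝ) :
    kl2 (interp2 N A) = Real.sqrt ((∑ i, ∑ j, (A i j)^2) / (N:ℝ)^2) := by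
  unfold kl2
  congr 1
  rw [← integral_interp2 hN (fun i j => (A i j)^2)]
  refine setIntegral_congr_fun (measurableSet_Icc.prod measurableSet_Icc) ?_
  intro q hq
  exact interp2_sq hq.1 hq.2 hN


lemma sqrt_jensen {α : Type*} [MeasurableSpace α] (μ : Measure α) [IsProbabilityMeasure μ]
    {h : α → ℝ} (h0 : ∀ x, 0 ≤ h x) (hi : Integrable h μ) :
    ∫ x, Real.sqrt (h x) ∂μ ≤ Real.sqrt (∫ x, h x ∂μ) := by
  set a := Real.sqrt (∫ x, h x ∂μ) with ha
  have hInt : 0 ≤ ∫ x, h x ∂μ := integral_nonneg h0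
  rcases eq_or_lt_of_le hInt with heq | hpos
  · have hz : h =ᵐ[μ] 0 := by
      rw [← integral_eq_zero_iff_of_nonneg_ae (Filter.Eventually.of_forall h0) hi]
      exact heq.symm
    have : (fun x => Real.sqrt (h x)) =ᵐ[μ] 0 := by
      filter_upwards [hz] with x hx
      simp [hx]
    rw [integral_congr_ae this]
    simp only [Pi.zero_apply, integral_zero]
    exact Real.sqrt_nonneg _
  · have ha0 : 0 < a := Real.sqrt_pos.mpr hpos
    have hbound : ∀ x, Real.sqrt (h x) ≤ (h x + a^2) / (2*a) := by
      intro x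
      rw [le_div_iff₀ (by positivity)]
      nlinarith [sq_nonneg (Real.sqrt (h x) - a), Real.sq_sqrt (h0 x), Real.sqrt_nonneg (h x)]
    calc ∫ x, Real.sqrt (h x) ∂μ ≤ ∫ x, (h x + a^2) / (2*a) ∂μ := by
          refine integral_mono_of_nonneg (Filter.Eventually.of_forall fun x => Real.sqrt_nonneg _)
            (((hi.add (integrable_const _)).div_const _)) (Filter.Eventually.of_forall hbound)
      _ = (∫ x, h x ∂μ + a^2) / (2*a) := by
          rw [integral_div, integral_add hi (integrable_const _), integral_const]
          simp
      _ = a := by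
          have : a^2 = ∫ x, h x ∂μ := Real.sq_sqrt hInt
          field_simp
          linarith


lemma integrable_dirac' {α : Type*} [MeasurableSpace α] [MeasurableSingletonClass α]
    (f : α → ℝ) (a : α) : Integrable f (Measure.dirac a) :=
  (integrable_const (f a)).congr (ae_eq_dirac f).symm

lemma integrable_bern (f : ℝ → ℝ) (hf : Measurable f) (p : ℝ) :
    Integrable f (bernoulliReal p) := by
  unfold bernoulliReal
  refine Integrable.add_measure ?_ ?_ <;>
    exact (integrable_dirac' f _).smul_measure ENNReal.ofReal_ne_top

lemma integral_bern (f : ℝ → ℝ) (hf : Measurable f) (p : ℝ) :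
    ∫ x, f x ∂(bernoulliReal p) = (ENNReal.ofReal p).toReal * f 1
      + (ENNReal.ofReal (1-p)).toReal * f 0 := by
  unfold bernoulliReal
  rw [integral_add_measure
    ((integrable_dirac' f _).smul_measure ENNReal.ofReal_ne_top)
    ((integrable_dirac' f _).smul_measure ENNReal.ofReal_ne_top),
    integral_smul_measure, integral_smul_measure, integral_dirac, integral_dirac,
    smul_eq_mul, smul_eq_mul]

lemma bern_mass (p : ℝ) (h : bernoulliReal p univ = 1) : p ∈ Icc (0:ℝ) 1 := by
  unfold bernoulliReal at h
  rw [Measure.add_apply, Measure.smul_apply, Measure.smul_apply,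
    Measure.dirac_apply_of_mem (mem_univ _), Measure.dirac_apply_of_mem (mem_univ _),
    smul_eq_mul, smul_eq_mul, mul_one, mul_one] at h
  constructor
  · by_contra hp
    push_neg at hp
    rw [ENNReal.ofReal_eq_zero.mpr hp.le, zero_add, ENNReal.ofReal_eq_one] at h
    linarith
  · by_contra hp
    push_neg at hp
    rw [ENNReal.ofReal_eq_zero.mpr (show (1:ℝ)-p ≤ 0 by linarith), add_zero,
      ENNReal.ofReal_eq_one] at h
    linarith

lemma cov1 (f : ℝ → ℝ) {t : ℝ} (ht : 0 < t) :
    ∫ x in Icc (0:ℝ) 1, f (x*t) = (1/t) * ∫ x in Icc (0:ℝ) t, f x := by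
  rw [integral_Icc_eq_integral_Ioc, ← intervalIntegral.integral_of_le zero_le_one,
    intervalIntegral.integral_comp_mul_right f ht.ne',
    intervalIntegral.integral_of_le (by linarith : (0:ℝ)*t ≤ 1*t)]
  rw [zero_mul, one_mul, ← integral_Icc_eq_integral_Ioc, smul_eq_mul, one_div]

lemma box_integrable {g : ℝ × ℝ → ℝ} (hg : Measurable g)
    (hb : ∀ q : ℝ × ℝ, 0 ≤ q.1 → 0 ≤ q.2 → |g q| ≤ 1) {c : ℝ} (hc : 0 ≤ c) :
    IntegrableOn g ((Icc (0:ℝ) c) ×ˢ (Icc (0:ℝ) c)) volume := by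
  have hbox : MeasurableSet ((Icc (0:ℝ) c) ×ˢ (Icc (0:ℝ) c)) :=
    measurableSet_Icc.prod measurableSet_Icc
  have : IsFiniteMeasure (volume.restrict ((Icc (0:ℝ) c) ×ˢ (Icc (0:ℝ) c))) := by
    constructor
    rw [Measure.restrict_apply_univ, Measure.volume_eq_prod, Measure.prod_prod,
      Real.volume_Icc]
    exact ENNReal.mul_lt_top ENNReal.ofReal_lt_top ENNReal.ofReal_lt_top
  refine Integrable.mono' (integrable_const 1) hg.aestronglyMeasurable.restrict ?_
  rw [ae_restrict_iff' hbox]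
  refine Filter.Eventually.of_forall (fun q hq => ?_)
  rw [Real.norm_eq_abs]
  exact hb q hq.1.1 hq.2.1

lemma cov2 {g : ℝ × ℝ → ℝ} (hg : Measurable g)
    (hb : ∀ q : ℝ × ℝ, 0 ≤ q.1 → 0 ≤ q.2 → |g q| ≤ 1) {t : ℝ} (ht : 0 < t) :
    ∫ q in (Icc (0:ℝ) 1) ×ˢ (Icc (0:ℝ) 1), g (q.1*t, q.2*t)
      = (∫ q in (Icc (0:ℝ) t) ×ˢ (Icc (0:ℝ) t), g q) / t^2 := by
  have hmt : Measurable (fun q : ℝ × ℝ => g (q.1*t, q.2*t)) :=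
    hg.comp ((measurable_fst.mul_const t).prodMk (measurable_snd.mul_const t))
  have hIL : IntegrableOn (fun q : ℝ × ℝ => g (q.1*t, q.2*t))
      ((Icc (0:ℝ) 1) ×ˢ (Icc (0:ℝ) 1)) volume := by
    refine box_integrable hmt (fun q h1 h2 => hb _ (by positivity) (by positivity)) zero_le_one
  have hIR : IntegrableOn g ((Icc (0:ℝ) t) ×ˢ (Icc (0:ℝ) t)) volume :=
    box_integrable hg hb ht.le
  rw [Measure.volume_eq_prod] at hIL hIR ⊢
  rw [setIntegral_prod _ hIL, setIntegral_prod _ hIR]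
  have inner : ∀ x : ℝ, ∫ y in Icc (0:ℝ) 1, g (x*t, y*t)
      = (1/t) * ∫ y in Icc (0:ℝ) t, g (x*t, y) := fun x => cov1 (fun y => g (x*t, y)) ht
  simp_rw [inner]
  rw [integral_const_mul]
  have outer : ∫ x in Icc (0:ℝ) 1, (fun x' => ∫ y in Icc (0:ℝ) t, g (x', y)) (x*t)
      = (1/t) * ∫ x in Icc (0:ℝ) t, ∫ y in Icc (0:ℝ) t, g (x, y) :=
    cov1 (fun x' => ∫ y in Icc (0:ℝ) t, g (x', y)) ht
  simp only at outer
  rw [outer]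
  ring

end Helpers

/-- `E‖W̄_N − P̄_N‖ ≤ √(L₁ − L₂²)/t_N` for Bernoulli edges sampled
(conditionally independently) from a sparse random graph model with zero diagonal. -/
theorem expected_edge_sampling_error {Ω₁ Ω₂ : Type*} [MeasurableSpace Ω₁] [MeasurableSpace Ω₂]
    (μ₁ : Measure Ω₁) (μ₂ : Measure Ω₂)
    [IsProbabilityMeasure μ₁] [IsProbabilityMeasure μ₂]
    (tN : ℝ) (htN : 0 < tN) (Wk : ℝ → ℝ → ℝ)
    (hWmeas : Measurable (Function.uncurry Wk))
    (hWsym : ∀ a b, Wk a b = Wk b a)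
    (hWrange : ∀ a b, 0 ≤ a → 0 ≤ b → Wk a b ∈ Set.Icc (0 : ℝ) 1)
    (hWdiag : ∀ a, 0 ≤ a → Wk a a = 0)
    (N : ℕ) (hN : 0 < N)
    (v : Fin N → Ω₁ → ℝ) (hiid : IIDUniform v μ₁)
    (u : Ω₁ → Fin N → ℝ) (hord : SortedVersion u v)
    (e : Fin N → Fin N → Ω₁ → Ω₂ → ℝ)
    (he : CondBernoulliAdj μ₂ e (fun a b => Wk (a * tN) (b * tN)) u) :
    (∫ ω₁, ∫ ω₂, kl2 (fun s t =>
        interp2 N (fun i j => e i j ω₁ ω₂) s t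
          - interp2 N (fun i j => Wk (u ω₁ i * tN) (u ω₁ j * tN)) s t) ∂μ₂ ∂μ₁)
      ≤ Real.sqrt (L1 Wk tN - L2sq Wk tN) / tN := by
  -- notation
  set F : ℝ × ℝ → ℝ := fun q => Wk (q.1 * tN) (q.2 * tN) - (Wk (q.1 * tN) (q.2 * tN))^2
    with hF
  have hFmeas : Measurable F := by
    have h1 : Measurable fun q : ℝ × ℝ => Wk (q.1 * tN) (q.2 * tN) :=
      hWmeas.comp ((measurable_fst.mul_const tN).prodMk (measurable_snd.mul_const tN))
    exact h1.sub (h1.pow_const 2)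
  have hFmem : ∀ q : ℝ × ℝ, 0 ≤ q.1 → 0 ≤ q.2 → F q ∈ Icc (0:ℝ) 1 := by
    intro q h1 h2
    have := hWrange (q.1 * tN) (q.2 * tN) (by positivity) (by positivity)
    simp only [hF]
    constructor
    · nlinarith [this.1, this.2]
    · nlinarith [this.1, this.2]
  have hFb : ∀ q : ℝ × ℝ, 0 ≤ q.1 → 0 ≤ q.2 → |F q| ≤ 1 := by
    intro q h1 h2
    rw [abs_le]
    exact ⟨by linarith [(hFmem q h1 h2).1], (hFmem q h1 h2).2⟩
  set Gv : Ω₁ → ℝ := fun ω₁ => (∑ i, ∑ j, F (v i ω₁, v j ω₁)) / (N:ℝ)^2 with hGv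
  set Gu : Ω₁ → ℝ := fun ω₁ => (∑ i, ∑ j, F (u ω₁ i, u ω₁ j)) / (N:ℝ)^2 with hGu
  -- p ∈ [0,1] for all ω₁
  have hpmem : ∀ ω₁ (i j : Fin N), Wk (u ω₁ i * tN) (u ω₁ j * tN) ∈ Icc (0:ℝ) 1 := by
    intro ω₁ i j
    have hlaw := he.2.2.2 i j ω₁
    have : IsProbabilityMeasure (μ₂.map (e i j ω₁)) :=
      Measure.isProbabilityMeasure_map (he.1 i j ω₁).aemeasurable
    rw [hlaw] at this
    exact bern_mass _ this.measure_univ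
  have hGuv : ∀ ω₁, Gu ω₁ = Gv ω₁ := by
    intro ω₁
    obtain ⟨-, σ, hσ⟩ := hord ω₁
    simp only [hGu, hGv]
    congr 1
    calc ∑ i, ∑ j, F (u ω₁ i, u ω₁ j)
        = ∑ i, ∑ j, F (v (σ i) ω₁, v (σ j) ω₁) := by
          simp_rw [hσ]
      _ = ∑ i, ∑ j, F (v (σ i) ω₁, v j ω₁) := by
          refine Finset.sum_congr rfl (fun i _ => ?_)
          exact Equiv.sum_comp σ (fun j => F (v (σ i) ω₁, v j ω₁))
      _ = ∑ i, ∑ j, F (v i ω₁, v j ω₁) :=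
          Equiv.sum_comp σ (fun i => ∑ j, F (v i ω₁, v j ω₁))
  have hGu_nonneg : ∀ ω₁, 0 ≤ Gu ω₁ := by
    intro ω₁
    apply div_nonneg _ (by positivity)
    refine Finset.sum_nonneg (fun i _ => Finset.sum_nonneg (fun j _ => ?_))
    have h := hpmem ω₁ i j
    simp only [hF]
    nlinarith [h.1, h.2]
  have hGv_nonneg : ∀ ω₁, 0 ≤ Gv ω₁ := fun ω₁ => hGuv ω₁ ▸ hGu_nonneg ω₁
  -- a.e. all v in [0,1]
  have hvmem : ∀ᵐ ω₁ ∂μ₁, ∀ i, v i ω₁ ∈ Icc (0:ℝ) 1 := by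
    rw [MeasureTheory.ae_all_iff]
    intro i
    have h1 : ∀ᵐ y ∂(volume.restrict (Icc (0:ℝ) 1)), y ∈ Icc (0:ℝ) 1 :=
      ae_restrict_mem measurableSet_Icc
    rw [← hiid.2.2 i] at h1
    exact (MeasureTheory.ae_map_iff (hiid.1 i).aemeasurable measurableSet_Icc).mp h1
  have hGv_meas : Measurable Gv := by
    apply Measurable.div_const
    refine Finset.measurable_sum _ (fun i _ => Finset.measurable_sum _ (fun j _ => ?_))
    exact hFmeas.comp ((hiid.1 i).prodMk (hiid.1 j))
  have hGv_bdd : ∀ᵐ ω₁ ∂μ₁, Gv ω₁ ≤ 1 := by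
    filter_upwards [hvmem] with ω₁ hmem
    simp only [hGv]
    rw [div_le_iff₀ (by positivity : (0:ℝ) < (N:ℝ)^2)]
    have : ∀ i j : Fin N, F (v i ω₁, v j ω₁) ≤ 1 := fun i j =>
      (hFmem _ (hmem i).1 (hmem j).1).2
    calc ∑ i, ∑ j, F (v i ω₁, v j ω₁) ≤ ∑ i : Fin N, ∑ j : Fin N, (1:ℝ) := by
          refine Finset.sum_le_sum (fun i _ => Finset.sum_le_sum (fun j _ => this i j))
      _ = (N:ℝ)^2 := by simp [sq]
      _ = 1 * (N:ℝ)^2 := by ring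
  have hGv_int : Integrable Gv μ₁ := by
    refine Integrable.mono' (integrable_const 1) hGv_meas.aestronglyMeasurable ?_
    filter_upwards [hGv_bdd] with ω₁ h1
    rw [Real.norm_eq_abs, abs_of_nonneg (hGv_nonneg ω₁)]
    exact h1
  have hsqGv_int : Integrable (fun ω₁ => Real.sqrt (Gv ω₁)) μ₁ := by
    refine Integrable.mono' (integrable_const 1)
      (Real.continuous_sqrt.measurable.comp hGv_meas).aestronglyMeasurable ?_
    filter_upwards [hGv_bdd] with ω₁ h1
    rw [Real.norm_eq_abs, abs_of_nonneg (Real.sqrt_nonneg _)]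
    exact Real.sqrt_le_one.2 h1
  -- STEP 1 : inner bound
  have step1 : ∀ ω₁, (∫ ω₂, kl2 (fun s t =>
        interp2 N (fun i j => e i j ω₁ ω₂) s t
          - interp2 N (fun i j => Wk (u ω₁ i * tN) (u ω₁ j * tN)) s t) ∂μ₂)
      ≤ Real.sqrt (Gu ω₁) := by
    intro ω₁
    set p : Fin N → Fin N → ℝ := fun i j => Wk (u ω₁ i * tN) (u ω₁ j * tN) with hp
    set h : Ω₂ → ℝ := fun ω₂ => (∑ i, ∑ j, (e i j ω₁ ω₂ - p i j)^2) / (N:ℝ)^2 with hh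
    have hkl : ∀ ω₂, kl2 (fun s t =>
        interp2 N (fun i j => e i j ω₁ ω₂) s t
          - interp2 N (fun i j => Wk (u ω₁ i * tN) (u ω₁ j * tN)) s t)
        = Real.sqrt (h ω₂) := by
      intro ω₂
      have heq : (fun s t =>
          interp2 N (fun i j => e i j ω₁ ω₂) s t
            - interp2 N (fun i j => Wk (u ω₁ i * tN) (u ω₁ j * tN)) s t)
          = interp2 N (fun i j => e i j ω₁ ω₂ - p i j) := by
        funext s t
        unfold interp2
        rw [← Finset.sum_sub_distrib]
        refine Finset.sum_congr rfl (fun i _ => ?_)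
        rw [← Finset.sum_sub_distrib]
        refine Finset.sum_congr rfl (fun j _ => ?_)
        ring
      rw [heq, kl2_interp2 hN]
    have hterm_int : ∀ i j : Fin N,
        Integrable (fun ω₂ => (e i j ω₁ ω₂ - p i j)^2) μ₂ := by
      intro i j
      have hg : Measurable (fun x : ℝ => (x - p i j)^2) :=
        ((measurable_id.sub_const _).pow_const 2)
      have hInt' : Integrable (fun x : ℝ => (x - p i j)^2) (μ₂.map (e i j ω₁)) := by
        rw [he.2.2.2 i j ω₁]
        exact integrable_bern _ hg _
      have := (integrable_map_measure hg.aestronglyMeasurable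
        (he.1 i j ω₁).aemeasurable).mp hInt'
      simpa [Function.comp_def] using this
    have hint : Integrable h μ₂ := by
      apply Integrable.div_const
      exact integrable_finset_sum _ (fun i _ => integrable_finset_sum _
        (fun j _ => hterm_int i j))
    have hmoment : ∀ i j : Fin N,
        ∫ ω₂, (e i j ω₁ ω₂ - p i j)^2 ∂μ₂ = p i j - (p i j)^2 := by
      intro i j
      have hg : Measurable (fun x : ℝ => (x - p i j)^2) :=
        ((measurable_id.sub_const _).pow_const 2)
      rw [← integral_map (he.1 i j ω₁).aemeasurable hg.aestronglyMeasurable]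
      rw [he.2.2.2 i j ω₁]
      rw [integral_bern _ hg]
      have hm := hpmem ω₁ i j
      rw [ENNReal.toReal_ofReal hm.1, ENNReal.toReal_ofReal (by linarith [hm.2])]
      simp only [hp]
      ring
    have hIh : ∫ ω₂, h ω₂ ∂μ₂ = Gu ω₁ := by
      simp only [hh]
      rw [integral_div, integral_finset_sum _ (fun i _ => integrable_finset_sum _
        (fun j _ => hterm_int i j))]
      simp_rw [fun i => integral_finset_sum Finset.univ (fun j _ => hterm_int i j),
        hmoment]
      rfl
    calc (∫ ω₂, kl2 (fun s t =>
          interp2 N (fun i j => e i j ω₁ ω₂) s t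
            - interp2 N (fun i j => Wk (u ω₁ i * tN) (u ω₁ j * tN)) s t) ∂μ₂)
        = ∫ ω₂, Real.sqrt (h ω₂) ∂μ₂ := by
          exact integral_congr_ae (Filter.Eventually.of_forall hkl)
      _ ≤ Real.sqrt (∫ ω₂, h ω₂ ∂μ₂) := by
          refine sqrt_jensen μ₂ (fun ω₂ => ?_) hint
          simp only [hh]
          positivity
      _ = Real.sqrt (Gu ω₁) := by rw [hIh]
  -- STEP 4 : the target integral D
  set D : ℝ := ∫ q in (Icc (0:ℝ) 1) ×ˢ (Icc (0:ℝ) 1), F q with hD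
  have hD_nonneg : 0 ≤ D := by
    refine setIntegral_nonneg (measurableSet_Icc.prod measurableSet_Icc) (fun q hq => ?_)
    exact (hFmem q hq.1.1 hq.2.1).1
  have hterm_int1 : ∀ i j : Fin N, Integrable (fun ω₁ => F (v i ω₁, v j ω₁)) μ₁ := by
    intro i j
    refine Integrable.mono' (integrable_const 1)
      (hFmeas.comp ((hiid.1 i).prodMk (hiid.1 j))).aestronglyMeasurable ?_
    filter_upwards [hvmem] with ω₁ hmem
    rw [Real.norm_eq_abs]
    exact hFb _ (hmem i).1 (hmem j).1
  have hoffdiag : ∀ i j : Fin N, i ≠ j → ∫ ω₁, F (v i ω₁, v j ω₁) ∂μ₁ = D := by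
    intro i j hij
    have hindep : IndepFun (v i) (v j) μ₁ := hiid.2.1.indepFun hij
    have hmap : μ₁.map (fun ω₁ => (v i ω₁, v j ω₁))
        = (volume.restrict (Icc (0:ℝ) 1)).prod (volume.restrict (Icc (0:ℝ) 1)) := by
      rw [(indepFun_iff_map_prod_eq_prod_map_map (hiid.1 i).aemeasurable
        (hiid.1 j).aemeasurable).mp hindep, hiid.2.2 i, hiid.2.2 j]
    have := integral_map (f := F)
      ((hiid.1 i).prodMk (hiid.1 j)).aemeasurable
      (by rw [hmap]
          exact hFmeas.aestronglyMeasurable)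
    rw [hmap] at this
    rw [← this, hD, Measure.prod_restrict, ← Measure.volume_eq_prod]
  have hdiag : ∀ i : Fin N, ∫ ω₁, F (v i ω₁, v i ω₁) ∂μ₁ = 0 := by
    intro i
    have : (fun ω₁ => F (v i ω₁, v i ω₁)) =ᵐ[μ₁] 0 := by
      filter_upwards [hvmem] with ω₁ hmem
      have h0 : (0:ℝ) ≤ v i ω₁ * tN := mul_nonneg (hmem i).1 htN.le
      simp only [hF, Pi.zero_apply]
      rw [hWdiag _ h0]
      ring
    rw [integral_congr_ae this]
    simp
  have step4 : ∫ ω₁, Gv ω₁ ∂μ₁ ≤ D := by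
    simp only [hGv]
    rw [integral_div, integral_finset_sum _ (fun i _ => integrable_finset_sum _
      (fun j _ => hterm_int1 i j))]
    simp_rw [fun i => integral_finset_sum Finset.univ (fun j _ => hterm_int1 i j)]
    rw [div_le_iff₀ (by positivity : (0:ℝ) < (N:ℝ)^2)]
    have hle : ∀ i j : Fin N, ∫ ω₁, F (v i ω₁, v j ω₁) ∂μ₁ ≤ D := by
      intro i j
      by_cases hij : i = j
      · subst hij; rw [hdiag i]; exact hD_nonneg
      · rw [hoffdiag i j hij]
    calc ∑ i : Fin N, ∑ j : Fin N, ∫ ω₁, F (v i ω₁, v j ω₁) ∂μ₁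
        ≤ ∑ i : Fin N, ∑ j : Fin N, D :=
          Finset.sum_le_sum (fun i _ => Finset.sum_le_sum (fun j _ => hle i j))
      _ = (N:ℝ)^2 * D := by simp [sq]; ring
      _ = D * (N:ℝ)^2 := by ring
  -- STEP 5 : identify D
  have hDval : D = (L1 Wk tN - L2sq Wk tN) / tN^2 := by
    have hW1 : Measurable (Function.uncurry Wk) := hWmeas
    have hWb : ∀ q : ℝ × ℝ, 0 ≤ q.1 → 0 ≤ q.2 → |Function.uncurry Wk q| ≤ 1 := by
      intro q h1 h2
      have := hWrange q.1 q.2 h1 h2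
      simp only [Function.uncurry]
      rw [abs_le]; exact ⟨by linarith [this.1], this.2⟩
    have hW2 : Measurable (fun q : ℝ × ℝ => (Function.uncurry Wk q)^2) :=
      hW1.pow_const 2
    have hWb2 : ∀ q : ℝ × ℝ, 0 ≤ q.1 → 0 ≤ q.2 → |(Function.uncurry Wk q)^2| ≤ 1 := by
      intro q h1 h2
      have := hWrange q.1 q.2 h1 h2
      simp only [Function.uncurry]
      rw [abs_le]
      constructor
      · nlinarith [this.1, this.2]
      · nlinarith [this.1, this.2]
    have hsplit : D = (∫ q in (Icc (0:ℝ) 1) ×ˢ (Icc (0:ℝ) 1),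
          Function.uncurry Wk (q.1 * tN, q.2 * tN))
        - ∫ q in (Icc (0:ℝ) 1) ×ˢ (Icc (0:ℝ) 1),
          (Function.uncurry Wk (q.1 * tN, q.2 * tN))^2 := by
      rw [hD, ← integral_sub]
      · rfl
      · exact box_integrable
          (hW1.comp ((measurable_fst.mul_const tN).prodMk (measurable_snd.mul_const tN)))
          (fun q h1 h2 => hWb _ (by positivity) (by positivity)) zero_le_one
      · exact box_integrable
          (hW2.comp ((measurable_fst.mul_const tN).prodMk (measurable_snd.mul_const tN)))
          (fun q h1 h2 => hWb2 _ (by positivity) (by positivity)) zero_le_one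
    rw [hsplit, cov2 hW1 hWb htN, cov2 hW2 hWb2 htN]
    rw [L1, L2sq]
    rw [div_sub_div_same]
    rfl
  -- FINAL CHAIN
  calc (∫ ω₁, ∫ ω₂, kl2 (fun s t =>
        interp2 N (fun i j => e i j ω₁ ω₂) s t
          - interp2 N (fun i j => Wk (u ω₁ i * tN) (u ω₁ j * tN)) s t) ∂μ₂ ∂μ₁)
      ≤ ∫ ω₁, Real.sqrt (Gv ω₁) ∂μ₁ := by
        refine integral_mono_of_nonneg ?_ hsqGv_int ?_
        · refine Filter.Eventually.of_forall (fun ω₁ => ?_)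
          exact integral_nonneg (fun ω₂ => Real.sqrt_nonneg _)
        · refine Filter.Eventually.of_forall (fun ω₁ => ?_)
          dsimp only
          rw [← hGuv ω₁]
          exact step1 ω₁
    _ ≤ Real.sqrt (∫ ω₁, Gv ω₁ ∂μ₁) := sqrt_jensen μ₁ hGv_nonneg hGv_int
    _ ≤ Real.sqrt D := Real.sqrt_le_sqrt step4
    _ = Real.sqrt (L1 Wk tN - L2sq Wk tN) / tN := by
        have hnum : 0 ≤ L1 Wk tN - L2sq Wk tN := by
          have := hD_nonneg
          rw [hDval] at this
          by_contra hcon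
          push_neg at hcon
          have : (L1 Wk tN - L2sq Wk tN) / tN^2 < 0 :=
            div_neg_of_neg_of_pos hcon (by positivity)
          linarith [hDval ▸ hD_nonneg]
        rw [hDval, Real.sqrt_div hnum, Real.sqrt_sq htN.le]

end
end

section
/- Let {φ̄_i}_{i∈ℤ∖{0}} and {φ_i}_{i∈ℤ∖{0}} be two orthonormal families in L²[0,1], and let X ∈ L²[0,1] satisfy X = Σ_i ⟨X, φ̄_i⟩ φ̄_i = Σ_i ⟨X, φ_i⟩ φ_i. Let (c_i)_{i∈ℤ∖{0}} be a bounded family of real numbers and suppose there exists k ∈ ℝ with |c_i − k| ≤ Δ for all i. Then ‖Σ_i c_i·(⟨X, φ̄_i⟩ φ̄_i − ⟨X, φ_i⟩ φ_i)‖_{L²[0,1]} ≤ 2Δ·‖X‖_{L²[0,1]}. -/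
open MeasureTheory Set ProbabilityTheory

noncomputable section

open Filter Topology
open scoped InnerProductSpace

namespace TwoBasisAux

variable {α : Type*} [MeasurableSpace α] {μ : Measure α}

lemma Lp_coeFn_sum {ι : Type*} (s : Finset ι) (f : ι → Lp ℝ 2 μ) :
    ⇑(∑ i ∈ s, f i) =ᵐ[μ] fun u => ∑ i ∈ s, (f i : α → ℝ) u := by
  classical
  induction s using Finset.induction_on with
  | empty => simp only [Finset.sum_empty]; exact Lp.coeFn_zero ℝ 2 μ
  | @insert i s his ih =>
    filter_upwards [Lp.coeFn_add (f i) (∑ j ∈ s, f j), ih] with u h1 h2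
    rw [Finset.sum_insert his, h1, Pi.add_apply, h2, Finset.sum_insert his]

lemma key {w : ℕ → Lp ℝ 2 μ} {Z : Lp ℝ 2 μ} (h : HasSum w Z) :
    ∀ᵐ u ∂μ, Summable (fun n => (w n : α → ℝ) u) →
      (∑' n, (w n : α → ℝ) u) = Z u := by
  have hT : Tendsto (fun n => ∑ i ∈ Finset.range n, w i) atTop (𝓝 Z) := h.tendsto_sum_nat
  have hm : TendstoInMeasure μ (fun n => ⇑(∑ i ∈ Finset.range n, w i)) atTop ⇑Z :=
    tendstoInMeasure_of_tendsto_Lp hT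
  obtain ⟨ns, hns, hae⟩ := hm.exists_seq_tendsto_ae
  have hsum : ∀ᵐ u ∂μ, ∀ n : ℕ,
      (⇑(∑ i ∈ Finset.range n, w i)) u = ∑ i ∈ Finset.range n, (w i : α → ℝ) u :=
    ae_all_iff.2 fun n => Lp_coeFn_sum _ _
  filter_upwards [hae, hsum] with u hu hS hsummable
  have h1 : Tendsto (fun n => ∑ i ∈ Finset.range n, (w i : α → ℝ) u) atTop
      (𝓝 (∑' n, (w n : α → ℝ) u)) := hsummable.hasSum.tendsto_sum_nat
  have h2 : Tendsto (fun j => ∑ i ∈ Finset.range (ns j), (w i : α → ℝ) u) atTop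
      (𝓝 (∑' n, (w n : α → ℝ) u)) := h1.comp hns.tendsto_atTop
  have h3 : Tendsto (fun j => ∑ i ∈ Finset.range (ns j), (w i : α → ℝ) u) atTop
      (𝓝 (Z u)) := Tendsto.congr (fun j => hS (ns j)) hu
  exact tendsto_nhds_unique h2 h3

lemma inner_L2 (f g : Lp ℝ 2 μ) : ⟪f, g⟫_ℝ = ∫ u, f u * g u ∂μ := by
  rw [MeasureTheory.L2.inner_def]
  simp [RCLike.inner_apply]
  exact integral_congr_ae (Eventually.of_forall fun u => mul_comm _ _)

lemma hasSum_norm_sq {E' : Type*} [NormedAddCommGroup E'] [InnerProductSpace ℝ E']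
    {ι' : Type*} {v : ι' → E'} (hv : Orthonormal ℝ v) {t : ι' → ℝ} {S : E'}
    (hS : HasSum (fun i => t i • v i) S) : HasSum (fun i => t i ^ 2) (‖S‖ ^ 2) := by
  classical
  have hinner : ∀ j, ⟪v j, S⟫_ℝ = t j := by
    intro j
    have h1 : HasSum (fun i => t i * ⟪v j, v i⟫_ℝ) ⟪v j, S⟫_ℝ := by
      simpa using (innerSL ℝ (v j)).hasSum hS
    have h2 : (fun i => t i * ⟪v j, v i⟫_ℝ) = fun i => if i = j then t j else 0 := by
      funext i
      rcases eq_or_ne i j with rfl | hij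
      · rw [if_pos rfl, real_inner_self_eq_norm_sq, hv.1 i]; ring
      · rw [if_neg hij, hv.2 (Ne.symm hij)]; ring
    rw [h2] at h1
    exact h1.unique (hasSum_ite_eq j (t j))
  have h3 : HasSum (fun i => t i * ⟪S, v i⟫_ℝ) ⟪S, S⟫_ℝ := by
    simpa using (innerSL ℝ S).hasSum hS
  have h4 : (fun i => t i * ⟪S, v i⟫_ℝ) = fun i => t i ^ 2 := by
    funext i
    rw [real_inner_comm, hinner i]; ring
  rw [h4] at h3
  rwa [real_inner_self_eq_norm_sq] at h3


lemma hasSum_toLp {ι : Type*} (e : ι ≃ ℕ)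
    {ψ : ι → α → ℝ} {v : ι → Lp ℝ 2 μ} (hco : ∀ i, ⇑(v i) =ᵐ[μ] ψ i)
    (hv : Orthonormal ℝ v) {X : α → ℝ} {Xl : Lp ℝ 2 μ} (hXl : ⇑Xl =ᵐ[μ] X)
    {t : ι → ℝ} (ht : ∀ i, ⟪v i, Xl⟫_ℝ = t i)
    (hexp : ∀ᵐ u ∂μ, X u = ∑' i, t i * ψ i u) :
    HasSum (fun i => t i • v i) Xl := by
  haveI : Countable ι := Countable.of_equiv ℕ e.symm
  have htsq : Summable (fun i => t i ^ 2) := by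
    have := hv.inner_products_summable Xl
    simpa [ht, Real.norm_eq_abs, sq_abs] using this
  have hsummv : Summable (fun i => t i • v i) := by
    have := (hv.orthogonalFamily.summable_iff_norm_sq_summable t).2
      (by simpa [Real.norm_eq_abs, sq_abs] using htsq)
    simpa [LinearIsometry.toSpanSingleton_apply] using this
  set Y := ∑' i, t i • v i with hYdef
  have hYsum : HasSum (fun i => t i • v i) Y := hsummv.hasSum
  have hnY : HasSum (fun i => t i ^ 2) (‖Y‖ ^ 2) := hasSum_norm_sq hv hYsum
  have hYle : ‖Y‖ ^ 2 ≤ ‖Xl‖ ^ 2 := by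
    have h1 := hnY.tsum_eq
    have h2 : ∑' i, t i ^ 2 ≤ ‖Xl‖ ^ 2 := by
      have := hv.tsum_inner_products_le Xl
      simpa [ht, Real.norm_eq_abs, sq_abs] using this
    linarith
  have hwsum : HasSum (fun n : ℕ => t (e.symm n) • v (e.symm n)) Y := by
    have := (e.symm.hasSum_iff (f := fun i => t i • v i)).2 hYsum
    exact this
  have hkey := key hwsum
  have hc2 : ∀ᵐ u ∂μ, ∀ i, ((t i • v i : Lp ℝ 2 μ) : α → ℝ) u = t i * ψ i u := by
    rw [ae_all_iff]
    intro i
    filter_upwards [Lp.coeFn_smul (t i) (v i), hco i] with u h1 h2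
    rw [h1, Pi.smul_apply, h2, smul_eq_mul]
  have hXY : ∀ᵐ u ∂μ, X u * (Y : α → ℝ) u = X u * X u := by
    filter_upwards [hkey, hc2, hexp] with u h1 h2 h3
    by_cases hs : Summable (fun i : ι => t i * ψ i u)
    · have hs2 : Summable (fun i : ι => ((t i • v i : Lp ℝ 2 μ) : α → ℝ) u) :=
        hs.congr fun i => (h2 i).symm
      have hs3 : Summable (fun n : ℕ => ((t (e.symm n) • v (e.symm n) : Lp ℝ 2 μ) : α → ℝ) u) := by
        have := (e.symm.summable_iff
          (f := fun i : ι => ((t i • v i : Lp ℝ 2 μ) : α → ℝ) u)).2 hs2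
        exact this
      have h4 : (∑' n : ℕ, ((t (e.symm n) • v (e.symm n) : Lp ℝ 2 μ) : α → ℝ) u) = Y u := h1 hs3
      have h5 : (∑' n : ℕ, ((t (e.symm n) • v (e.symm n) : Lp ℝ 2 μ) : α → ℝ) u)
          = ∑' i : ι, ((t i • v i : Lp ℝ 2 μ) : α → ℝ) u :=
        e.symm.tsum_eq (f := fun i : ι => ((t i • v i : Lp ℝ 2 μ) : α → ℝ) u)
      have h6 : (∑' i : ι, ((t i • v i : Lp ℝ 2 μ) : α → ℝ) u) = ∑' i : ι, t i * ψ i u :=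
        tsum_congr h2
      have h7 : Y u = X u := by rw [← h4, h5, h6, ← h3]
      rw [h7]
    · have h0 : X u = 0 := by rw [h3, tsum_eq_zero_of_not_summable hs]
      rw [h0]; ring
  have hIP : ⟪Xl, Y⟫_ℝ = ‖Xl‖ ^ 2 := by
    rw [inner_L2]
    have h1 : ∫ u, Xl u * Y u ∂μ = ∫ u, X u * X u ∂μ := by
      refine integral_congr_ae ?_
      filter_upwards [hXl, hXY] with u h h'
      rw [h, h']
    have h2 : ∫ u, X u * X u ∂μ = ∫ u, Xl u * Xl u ∂μ := by
      refine integral_congr_ae ?_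
      filter_upwards [hXl] with u h
      rw [h]
    rw [h1, h2, ← inner_L2, real_inner_self_eq_norm_sq]
  have hsub : ‖Xl - Y‖ ^ 2 ≤ 0 := by
    rw [norm_sub_sq_real, hIP]; linarith
  have hXlY : Xl = Y := by
    have h0 : ‖Xl - Y‖ = 0 := by
      have h1 : ‖Xl - Y‖ ^ 2 = 0 := le_antisymm hsub (sq_nonneg _)
      exact (pow_eq_zero_iff (two_ne_zero)).1 h1
    have := norm_eq_zero.1 h0
    exact (sub_eq_zero.1 this)
  rw [hXlY]
  exact hYsum


lemma aux_main {ι : Type*} (e : ι ≃ ℕ)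
    (ψb ψf : ι → α → ℝ) (Eb F : ι → Lp ℝ 2 μ)
    (hcob : ∀ i, ⇑(Eb i) =ᵐ[μ] ψb i) (hcof : ∀ i, ⇑(F i) =ᵐ[μ] ψf i)
    (hONb : Orthonormal ℝ Eb) (hONf : Orthonormal ℝ F)
    (X : α → ℝ) (Xl : Lp ℝ 2 μ) (hXl : ⇑Xl =ᵐ[μ] X)
    (a b : ι → ℝ) (hab : ∀ i, ⟪Eb i, Xl⟫_ℝ = a i) (hbb : ∀ i, ⟪F i, Xl⟫_ℝ = b i)
    (hexpb : ∀ᵐ u ∂μ, X u = ∑' i, a i * ψb i u)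
    (hexpf : ∀ᵐ u ∂μ, X u = ∑' i, b i * ψf i u)
    (c : ι → ℝ) (k Δ : ℝ) (hΔ : 0 ≤ Δ) (hk : ∀ i, |c i - k| ≤ Δ) :
    Real.sqrt (∫ u, (∑' i, c i * (a i * ψb i u - b i * ψf i u)) ^ 2 ∂μ)
      ≤ 2 * Δ * ‖Xl‖ := by
  haveI : Countable ι := Countable.of_equiv ℕ e.symm
  have hYb : HasSum (fun i => a i • Eb i) Xl := hasSum_toLp e hcob hONb hXl hab hexpb
  have hYf : HasSum (fun i => b i • F i) Xl := hasSum_toLp e hcof hONf hXl hbb hexpf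
  have hasq : Summable (fun i => a i ^ 2) := by
    simpa [hab, Real.norm_eq_abs, sq_abs] using hONb.inner_products_summable Xl
  have hbsq : Summable (fun i => b i ^ 2) := by
    simpa [hbb, Real.norm_eq_abs, sq_abs] using hONf.inner_products_summable Xl
  have hatsum : ∑' i, a i ^ 2 ≤ ‖Xl‖ ^ 2 := by
    simpa [hab, Real.norm_eq_abs, sq_abs] using hONb.tsum_inner_products_le Xl
  have hbtsum : ∑' i, b i ^ 2 ≤ ‖Xl‖ ^ 2 := by
    simpa [hbb, Real.norm_eq_abs, sq_abs] using hONf.tsum_inner_products_le Xl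
  have hsqle : ∀ i, ((c i - k) * a i) ^ 2 ≤ Δ ^ 2 * a i ^ 2 := by
    intro i
    have h1 : (c i - k) ^ 2 ≤ Δ ^ 2 := by
      have := hk i
      nlinarith [abs_nonneg (c i - k), sq_abs (c i - k)]
    nlinarith [sq_nonneg (a i)]
  have hsqleb : ∀ i, ((c i - k) * b i) ^ 2 ≤ Δ ^ 2 * b i ^ 2 := by
    intro i
    have h1 : (c i - k) ^ 2 ≤ Δ ^ 2 := by
      have := hk i
      nlinarith [abs_nonneg (c i - k), sq_abs (c i - k)]
    nlinarith [sq_nonneg (b i)]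
  have hdasq : Summable (fun i => ((c i - k) * a i) ^ 2) :=
    Summable.of_nonneg_of_le (fun i => sq_nonneg _) hsqle (hasq.mul_left (Δ ^ 2))
  have hdbsq : Summable (fun i => ((c i - k) * b i) ^ 2) :=
    Summable.of_nonneg_of_le (fun i => sq_nonneg _) hsqleb (hbsq.mul_left (Δ ^ 2))
  have hUsummable : Summable (fun i => ((c i - k) * a i) • Eb i) := by
    have := (hONb.orthogonalFamily.summable_iff_norm_sq_summable
      (fun i => (c i - k) * a i)).2 (by simpa [Real.norm_eq_abs, abs_mul, mul_pow, sq_abs] using hdasq)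
    simpa [LinearIsometry.toSpanSingleton_apply] using this
  have hVsummable : Summable (fun i => ((c i - k) * b i) • F i) := by
    have := (hONf.orthogonalFamily.summable_iff_norm_sq_summable
      (fun i => (c i - k) * b i)).2 (by simpa [Real.norm_eq_abs, abs_mul, mul_pow, sq_abs] using hdbsq)
    simpa [LinearIsometry.toSpanSingleton_apply] using this
  set U := ∑' i, ((c i - k) * a i) • Eb i with hUdef
  set V := ∑' i, ((c i - k) * b i) • F i with hVdef
  have hUsum : HasSum (fun i => ((c i - k) * a i) • Eb i) U := hUsummable.hasSum
  have hVsum : HasSum (fun i => ((c i - k) * b i) • F i) V := hVsummable.hasSum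
  have hnU : HasSum (fun i => ((c i - k) * a i) ^ 2) (‖U‖ ^ 2) := hasSum_norm_sq hONb hUsum
  have hnV : HasSum (fun i => ((c i - k) * b i) ^ 2) (‖V‖ ^ 2) := hasSum_norm_sq hONf hVsum
  have hUn : ‖U‖ ≤ Δ * ‖Xl‖ := by
    have h1 := hnU.tsum_eq
    have h2 : ∑' i, ((c i - k) * a i) ^ 2 ≤ ∑' i, Δ ^ 2 * a i ^ 2 :=
      Summable.tsum_le_tsum hsqle hdasq (hasq.mul_left _)
    have h3 : ∑' i, Δ ^ 2 * a i ^ 2 = Δ ^ 2 * ∑' i, a i ^ 2 := tsum_mul_left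
    have h4 : ‖U‖ ^ 2 ≤ Δ ^ 2 * ‖Xl‖ ^ 2 := by
      rw [← h1]
      calc (∑' i, ((c i - k) * a i) ^ 2) ≤ Δ ^ 2 * ∑' i, a i ^ 2 := by rw [← h3]; exact h2
        _ ≤ Δ ^ 2 * ‖Xl‖ ^ 2 := mul_le_mul_of_nonneg_left hatsum (sq_nonneg Δ)
    nlinarith [norm_nonneg U, mul_nonneg hΔ (norm_nonneg Xl)]
  have hVn : ‖V‖ ≤ Δ * ‖Xl‖ := by
    have h1 := hnV.tsum_eq
    have h2 : ∑' i, ((c i - k) * b i) ^ 2 ≤ ∑' i, Δ ^ 2 * b i ^ 2 :=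
      Summable.tsum_le_tsum hsqleb hdbsq (hbsq.mul_left _)
    have h3 : ∑' i, Δ ^ 2 * b i ^ 2 = Δ ^ 2 * ∑' i, b i ^ 2 := tsum_mul_left
    have h4 : ‖V‖ ^ 2 ≤ Δ ^ 2 * ‖Xl‖ ^ 2 := by
      rw [← h1]
      calc (∑' i, ((c i - k) * b i) ^ 2) ≤ Δ ^ 2 * ∑' i, b i ^ 2 := by rw [← h3]; exact h2
        _ ≤ Δ ^ 2 * ‖Xl‖ ^ 2 := mul_le_mul_of_nonneg_left hbtsum (sq_nonneg Δ)
    nlinarith [norm_nonneg V, mul_nonneg hΔ (norm_nonneg Xl)]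
  have hcab : HasSum (fun i => (c i * a i) • Eb i) (U + k • Xl) := by
    have h1 : HasSum (fun i => (k * a i) • Eb i) (k • Xl) := by
      simpa [smul_smul] using hYb.const_smul k
    have h2 := hUsum.add h1
    have h3 : (fun i => ((c i - k) * a i) • Eb i + (k * a i) • Eb i)
        = fun i => (c i * a i) • Eb i := by
      funext i
      rw [← add_smul]
      ring_nf
    rwa [h3] at h2
  have hcbf : HasSum (fun i => (c i * b i) • F i) (V + k • Xl) := by
    have h1 : HasSum (fun i => (k * b i) • F i) (k • Xl) := by
      simpa [smul_smul] using hYf.const_smul k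
    have h2 := hVsum.add h1
    have h3 : (fun i => ((c i - k) * b i) • F i + (k * b i) • F i)
        = fun i => (c i * b i) • F i := by
      funext i
      rw [← add_smul]
      ring_nf
    rwa [h3] at h2
  have hw : HasSum (fun i => (c i * a i) • Eb i - (c i * b i) • F i) (U - V) := by
    have := hcab.sub hcbf
    simpa using this
  set Z := U - V with hZdef
  set w : ι → Lp ℝ 2 μ := fun i => (c i * a i) • Eb i - (c i * b i) • F i with hwdef
  have hwkey : ∀ᵐ u ∂μ, Summable (fun n : ℕ => (w (e.symm n) : α → ℝ) u) →
      (∑' n : ℕ, (w (e.symm n) : α → ℝ) u) = (Z : α → ℝ) u := by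
    refine key ?_
    have := (e.symm.hasSum_iff (f := w)).2 hw
    exact this
  have hwco : ∀ᵐ u ∂μ, ∀ i, (w i : α → ℝ) u = c i * (a i * ψb i u - b i * ψf i u) := by
    rw [ae_all_iff]
    intro i
    filter_upwards [Lp.coeFn_sub ((c i * a i) • Eb i) ((c i * b i) • F i),
      Lp.coeFn_smul (c i * a i) (Eb i), Lp.coeFn_smul (c i * b i) (F i),
      hcob i, hcof i] with u h1 h2 h3 h4 h5
    show (⇑((c i * a i) • Eb i - (c i * b i) • F i)) u = _
    rw [h1, Pi.sub_apply, h2, h3, Pi.smul_apply, Pi.smul_apply, h4, h5,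
      smul_eq_mul, smul_eq_mul]
    ring
  have hg : ∀ᵐ u ∂μ, (∑' i, c i * (a i * ψb i u - b i * ψf i u)) ^ 2 ≤ ((Z : α → ℝ) u) ^ 2 := by
    filter_upwards [hwkey, hwco] with u h1 h2
    by_cases hs : Summable (fun i => c i * (a i * ψb i u - b i * ψf i u))
    · have hs2 : Summable (fun i => (w i : α → ℝ) u) := hs.congr fun i => (h2 i).symm
      have hs3 : Summable (fun n : ℕ => (w (e.symm n) : α → ℝ) u) := by
        have := (e.symm.summable_iff (f := fun i => (w i : α → ℝ) u)).2 hs2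
        exact this
      have h4 : (∑' n : ℕ, (w (e.symm n) : α → ℝ) u) = Z u := h1 hs3
      have h5 : (∑' n : ℕ, (w (e.symm n) : α → ℝ) u) = ∑' i, (w i : α → ℝ) u :=
        e.symm.tsum_eq (f := fun i => (w i : α → ℝ) u)
      have h6 : (∑' i, (w i : α → ℝ) u) = ∑' i, c i * (a i * ψb i u - b i * ψf i u) :=
        tsum_congr h2
      rw [← h6, ← h5, h4]
    · rw [tsum_eq_zero_of_not_summable hs]
      simpa using sq_nonneg ((Z : α → ℝ) u)
  have hZsq : Integrable (fun u => ((Z : α → ℝ) u) ^ 2) μ := (Lp.memLp Z).integrable_sq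
  have hint : (∫ u, (∑' i, c i * (a i * ψb i u - b i * ψf i u)) ^ 2 ∂μ)
      ≤ ∫ u, ((Z : α → ℝ) u) ^ 2 ∂μ :=
    integral_mono_of_nonneg (Eventually.of_forall fun u => sq_nonneg _) hZsq hg
  have hZn : (∫ u, ((Z : α → ℝ) u) ^ 2 ∂μ) = ‖Z‖ ^ 2 := by
    rw [← real_inner_self_eq_norm_sq, inner_L2]
    refine integral_congr_ae (Eventually.of_forall fun u => ?_)
    ring
  calc Real.sqrt (∫ u, (∑' i, c i * (a i * ψb i u - b i * ψf i u)) ^ 2 ∂μ)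
      ≤ Real.sqrt (∫ u, ((Z : α → ℝ) u) ^ 2 ∂μ) := Real.sqrt_le_sqrt hint
    _ = Real.sqrt (‖Z‖ ^ 2) := by rw [hZn]
    _ = ‖Z‖ := Real.sqrt_sq (norm_nonneg _)
    _ = ‖U - V‖ := by rw [hZdef]
    _ ≤ ‖U‖ + ‖V‖ := norm_sub_le _ _
    _ ≤ Δ * ‖Xl‖ + Δ * ‖Xl‖ := add_le_add hUn hVn
    _ = 2 * Δ * ‖Xl‖ := by ring

end TwoBasisAux

/-- for two orthonormal families both expanding `X`, and coefficients `cᵢ`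
within `Δ` of a constant `k`, `‖Σᵢ cᵢ·(⟨X, φ̄ᵢ⟩φ̄ᵢ − ⟨X, φᵢ⟩φᵢ)‖ ≤ 2Δ·‖X‖`. -/
theorem two_basis_expansion_difference_bound (φb φ : ℤ → ℝ → ℝ)
    (hmemb : ∀ i : ℤ, i ≠ 0 → MemLp (φb i) 2 (volume.restrict (Set.Icc (0 : ℝ) 1)))
    (hmem : ∀ i : ℤ, i ≠ 0 → MemLp (φ i) 2 (volume.restrict (Set.Icc (0 : ℝ) 1)))
    (hONb : ∀ i j : ℤ, i ≠ 0 → j ≠ 0 →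
      (∫ t in Set.Icc (0 : ℝ) 1, φb i t * φb j t) = if i = j then 1 else 0)
    (hON : ∀ i j : ℤ, i ≠ 0 → j ≠ 0 →
      (∫ t in Set.Icc (0 : ℝ) 1, φ i t * φ j t) = if i = j then 1 else 0)
    (X : ℝ → ℝ) (hX : MemLp X 2 (volume.restrict (Set.Icc (0 : ℝ) 1)))
    (hexpb : ∀ᵐ u ∂(volume.restrict (Set.Icc (0 : ℝ) 1)),
      X u = ∑' i : {i : ℤ // i ≠ 0}, (∫ t in Set.Icc (0 : ℝ) 1, X t * φb i t) * φb i u)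
    (hexp : ∀ᵐ u ∂(volume.restrict (Set.Icc (0 : ℝ) 1)),
      X u = ∑' i : {i : ℤ // i ≠ 0}, (∫ t in Set.Icc (0 : ℝ) 1, X t * φ i t) * φ i u)
    (c : ℤ → ℝ) (hbdd : ∃ C : ℝ, ∀ i : ℤ, i ≠ 0 → |c i| ≤ C)
    (k Δ : ℝ) (hk : ∀ i : ℤ, i ≠ 0 → |c i - k| ≤ Δ) :
    l2 (fun u => ∑' i : {i : ℤ // i ≠ 0},
        c i * ((∫ t in Set.Icc (0 : ℝ) 1, X t * φb i t) * φb i u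
          - (∫ t in Set.Icc (0 : ℝ) 1, X t * φ i t) * φ i u))
      ≤ 2 * Δ * l2 X := by
  classical
  let μ : Measure ℝ := volume.restrict (Set.Icc (0 : ℝ) 1)
  haveI : Infinite {i : ℤ // i ≠ 0} := by
    refine Infinite.of_injective (fun n : ℕ => (⟨(n : ℤ) + 1, by omega⟩ : {i : ℤ // i ≠ 0})) ?_
    intro m n h
    have h2 : ((m : ℤ) + 1 : ℤ) = (n : ℤ) + 1 := congrArg Subtype.val h
    omega
  obtain ⟨d⟩ := nonempty_denumerable {i : ℤ // i ≠ 0}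
  letI := d
  let e : {i : ℤ // i ≠ 0} ≃ ℕ := Denumerable.eqv _
  let Eb : {i : ℤ // i ≠ 0} → Lp ℝ 2 μ := fun i => (hmemb i.1 i.2).toLp (φb i.1)
  let F : {i : ℤ // i ≠ 0} → Lp ℝ 2 μ := fun i => (hmem i.1 i.2).toLp (φ i.1)
  let Xl : Lp ℝ 2 μ := hX.toLp X
  have hcob : ∀ i, ⇑(Eb i) =ᵐ[μ] φb i.1 := fun i => MemLp.coeFn_toLp _
  have hcof : ∀ i, ⇑(F i) =ᵐ[μ] φ i.1 := fun i => MemLp.coeFn_toLp _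
  have hXl : ⇑Xl =ᵐ[μ] X := MemLp.coeFn_toLp _
  have hONE : Orthonormal ℝ Eb := by
    rw [orthonormal_iff_ite]
    intro i j
    have h1 : ⟪Eb i, Eb j⟫_ℝ = ∫ u, φb i.1 u * φb j.1 u ∂μ := by
      rw [TwoBasisAux.inner_L2]
      refine integral_congr_ae ?_
      filter_upwards [hcob i, hcob j] with u g1 g2
      rw [g1, g2]
    rw [h1]
    have h2 := hONb i.1 j.1 i.2 j.2
    rw [h2]
    simp [Subtype.ext_iff]
  have hONF : Orthonormal ℝ F := by
    rw [orthonormal_iff_ite]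
    intro i j
    have h1 : ⟪F i, F j⟫_ℝ = ∫ u, φ i.1 u * φ j.1 u ∂μ := by
      rw [TwoBasisAux.inner_L2]
      refine integral_congr_ae ?_
      filter_upwards [hcof i, hcof j] with u g1 g2
      rw [g1, g2]
    rw [h1]
    have h2 := hON i.1 j.1 i.2 j.2
    rw [h2]
    simp [Subtype.ext_iff]
  have hab : ∀ i : {i : ℤ // i ≠ 0},
      ⟪Eb i, Xl⟫_ℝ = (fun i : {i : ℤ // i ≠ 0} => ∫ t in Set.Icc (0 : ℝ) 1, X t * φb i.1 t) i := by
    intro i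
    rw [TwoBasisAux.inner_L2]
    refine integral_congr_ae ?_
    filter_upwards [hcob i, hXl] with u h1 h2
    rw [h1, h2, mul_comm]
  have hbb : ∀ i : {i : ℤ // i ≠ 0},
      ⟪F i, Xl⟫_ℝ = (fun i : {i : ℤ // i ≠ 0} => ∫ t in Set.Icc (0 : ℝ) 1, X t * φ i.1 t) i := by
    intro i
    rw [TwoBasisAux.inner_L2]
    refine integral_congr_ae ?_
    filter_upwards [hcof i, hXl] with u h1 h2
    rw [h1, h2, mul_comm]
  have hΔ : 0 ≤ Δ := le_trans (abs_nonneg _) (hk 1 one_ne_zero)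
  have hmain := TwoBasisAux.aux_main e (fun i => φb i.1) (fun i => φ i.1) Eb F hcob hcof
    hONE hONF X Xl hXl
    (fun i : {i : ℤ // i ≠ 0} => ∫ t in Set.Icc (0 : ℝ) 1, X t * φb i.1 t)
    (fun i : {i : ℤ // i ≠ 0} => ∫ t in Set.Icc (0 : ℝ) 1, X t * φ i.1 t)
    hab hbb hexpb hexp (fun i => c i.1) k Δ hΔ (fun i => hk i.1 i.2)
  have hl2X : l2 X = ‖Xl‖ := by
    have h0 : l2 X = Real.sqrt (∫ u, X u ^ 2 ∂μ) := rfl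
    have h1 : (∫ u, X u ^ 2 ∂μ) = ‖Xl‖ ^ 2 := by
      rw [← real_inner_self_eq_norm_sq, TwoBasisAux.inner_L2]
      refine integral_congr_ae ?_
      filter_upwards [hXl] with u h
      rw [h]
      ring
    rw [h0, h1, Real.sqrt_sq (norm_nonneg _)]
  have hgoal_eq : l2 (fun u => ∑' i : {i : ℤ // i ≠ 0},
        c i * ((∫ t in Set.Icc (0 : ℝ) 1, X t * φb i t) * φb i u
          - (∫ t in Set.Icc (0 : ℝ) 1, X t * φ i t) * φ i u))
      = Real.sqrt (∫ u, (∑' i : {i : ℤ // i ≠ 0},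
        c i * ((∫ t in Set.Icc (0 : ℝ) 1, X t * φb i t) * φb i u
          - (∫ t in Set.Icc (0 : ℝ) 1, X t * φ i t) * φ i u)) ^ 2 ∂μ) := rfl
  rw [hgoal_eq, hl2X]
  exact hmain


end
end
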